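/- Two phylogenetic trees T and T' on X display the same quartet system, Q(T) = Q(T'), if and only if there is a graph isomorphism from T to T' fixing every element of X; in particular, a phylogenetic tree on X is uniquely determined (up to isomorphism fixing X) by the set of all quartets it displays. -/

import Mathlib

namespace PhyloPaper

variable {V X M : Type}

/-- The degree of a vertex: the number of its neighbors. -/
noncomputable def deg (G : SimpleGraph V) (v : V) : ℕ := (G.neighborSet v).ncard

/-- `v` lies on the (unique, in a tree) path between `x` and `y`. -/
def OnPath (G : SimpleGraph V) (x y v : V) : Prop :=
  ∀ p : G.Walk x y, p.IsPath → v ∈ p.support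

/-- `m` is a median of `x, y, z`: it lies on all three pairwise paths. -/
def IsMedian (G : SimpleGraph V) (x y z m : V) : Prop :=
  OnPath G x y m ∧ OnPath G y z m ∧ OnPath G x z m

/-- An (unrooted) phylogenetic tree on `X`: a tree whose leaf set is (the image of) `X`
and which has no vertex of degree 2. -/
structure IsPhyloTree (G : SimpleGraph V) (leaf : X → V) : Prop where
  isTree : G.IsTree
  leaf_inj : Function.Injective leaf
  leaf_iff : ∀ v : V, (∃ x : X, leaf x = v) ↔ deg G v = 1
  no_deg_two : ∀ v : V, deg G v ≠ 2

/-- A phylogenetic tree is binary if every interior vertex (degree ≥ 2) has degree 3. -/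
def IsBinary (G : SimpleGraph V) : Prop := ∀ v : V, 2 ≤ deg G v → deg G v = 3

/-- A symbolic dating map sends every leaf to `⊙` (modelled as `none`). -/
def IsDatingMap (leaf : X → V) (t : V → Option M) : Prop := ∀ x : X, t (leaf x) = none

/-- A dating map is discriminating if adjacent vertices get different values. -/
def Discriminating (G : SimpleGraph V) (t : V → Option M) : Prop :=
  ∀ u v : V, G.Adj u v → t u ≠ t v

/-- `δ` is the ternary map induced by the dated tree `(G, leaf, t)`:
`δ x y z = t (med (leaf x) (leaf y) (leaf z))`. -/
def InducedDelta (G : SimpleGraph V) (leaf : X → V) (t : V → Option M)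
    (δ : X → X → X → Option M) : Prop :=
  ∀ x y z : X, ∃ m : V, IsMedian G (leaf x) (leaf y) (leaf z) m ∧ δ x y z = t m

/-- The (well-defined, for symmetric `δ`) value of `δ` on a 3-element subset `T` is `a`. -/
def ValOn (δ : X → X → X → Option M) [DecidableEq X] (T : Finset X) (a : Option M) : Prop :=
  ∃ x y z : X, x ≠ y ∧ x ≠ z ∧ y ≠ z ∧ T = {x, y, z} ∧ δ x y z = a

/-- `S` is `n`-`m` partitioned by `δ`: `δ` takes exactly two values on the 3-element
subsets of `S`, one value on exactly `n` of them and the other on exactly `m` of them. -/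
def Partitioned [DecidableEq X] (δ : X → X → X → Option M) (S : Finset X) (n m : ℕ) : Prop :=
  ∃ a b : Option M, a ≠ b ∧
    {T : Finset X | T ∈ S.powersetCard 3 ∧ ValOn δ T a}.ncard = n ∧
    {T : Finset X | T ∈ S.powersetCard 3 ∧ ValOn δ T b}.ncard = m ∧
    ∀ T ∈ S.powersetCard 3, ValOn δ T a ∨ ValOn δ T b

/-- Condition (1): `δ` is symmetric under all permutations of its arguments. -/
def Symm3 (δ : X → X → X → Option M) : Prop :=
  ∀ x y z : X, δ x y z = δ y x z ∧ δ x y z = δ x z y ∧ δ x y z = δ z y x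

/-- Condition (2): `δ x y z = ⊙` iff `x, y, z` are not pairwise distinct. -/
def VanishCond (δ : X → X → X → Option M) : Prop :=
  ∀ x y z : X, δ x y z = none ↔ (x = y ∨ y = z ∨ x = z)

/-- `a, b, c, d` are pairwise distinct. -/
def P4 (a b c d : X) : Prop := a ≠ b ∧ a ≠ c ∧ a ≠ d ∧ b ≠ c ∧ b ≠ d ∧ c ≠ d

/-- `a, b, c, d, e` are pairwise distinct. -/
def P5 (a b c d e : X) : Prop := P4 a b c d ∧ a ≠ e ∧ b ≠ e ∧ c ≠ e ∧ d ≠ e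

/-- Condition (3): on four distinct taxa `δ` takes at most 2 values, and if exactly 2,
then the 4-set is 2-2 partitioned. -/
def FourPointCond [DecidableEq X] (δ : X → X → X → Option M) : Prop :=
  ∀ x y z u : X, P4 x y z u →
    ({δ x y z, δ x y u, δ x z u, δ y z u} : Set (Option M)).ncard ≤ 2 ∧
    (({δ x y z, δ x y u, δ x z u, δ y z u} : Set (Option M)).ncard = 2 →
      Partitioned δ ({x, y, z, u} : Finset X) 2 2)

/-- Condition (4): no 5-element subset of `X` is 5-5 partitioned by `δ`. -/
def FivePointCond [DecidableEq X] (δ : X → X → X → Option M) : Prop :=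
  ∀ S : Finset X, S.card = 5 → ¬ Partitioned δ S 5 5

/-- A symbolic ternary metric. -/
def IsSymbolicTernaryMetric [DecidableEq X] (δ : X → X → X → Option M) : Prop :=
  Symm3 δ ∧ VanishCond δ ∧ FourPointCond δ ∧ FivePointCond δ

/-- Condition (*): `δ` is fully resolved. -/
def FullyResolved [DecidableEq X] (δ : X → X → X → Option M) : Prop :=
  ∀ x y z u : X, P4 x y z u →
    ({δ x y z, δ x y u, δ x z u, δ y z u} : Set (Option M)).ncard = 1 →
    ∃ e : X, Partitioned δ ({x, y, z, u, e} : Finset X) 4 6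

/-- The tree displays the quartet `ab|cd`: the path from `a` to `b` is
vertex-disjoint from the path from `c` to `d`. -/
def Displays (G : SimpleGraph V) (leaf : X → V) (a b c d : X) : Prop :=
  ∃ p : G.Walk (leaf a) (leaf b), p.IsPath ∧
    ∃ q : G.Walk (leaf c) (leaf d), q.IsPath ∧ ∀ v : V, v ∈ p.support → v ∉ q.support

/-- `Q a b c d` represents membership of the quartet `ab|cd`; a quartet system must be
invariant under the symmetries of quartets and only contain genuine quartets. -/
def IsQuartetSystem (Q : X → X → X → X → Prop) : Prop :=
  ∀ a b c d : X, (Q a b c d → P4 a b c d) ∧ (Q a b c d ↔ Q b a c d) ∧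
    (Q a b c d ↔ Q a b d c) ∧ (Q a b c d ↔ Q c d a b)

/-- Thin: at most one of the three quartets on any 4 taxa. -/
def Thin (Q : X → X → X → X → Prop) : Prop :=
  ∀ a b c d : X, P4 a b c d →
    ¬(Q a b c d ∧ Q a c b d) ∧ ¬(Q a b c d ∧ Q a d b c) ∧ ¬(Q a c b d ∧ Q a d b c)

/-- Transitive quartet system. -/
def TransitiveQ (Q : X → X → X → X → Prop) : Prop :=
  ∀ a b c d e : X, P5 a b c d e → Q a b c e → Q a b d e → Q a b c d

/-- Saturated quartet system. -/
def SaturatedQ (Q : X → X → X → X → Prop) : Prop :=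
  ∀ a b c d e : X, P5 a b c d e → Q a b c d → (Q a e c d ∨ Q a b c e)

/-- Complete: exactly one of the three quartets on any 4 distinct taxa. -/
def CompleteQ (Q : X → X → X → X → Prop) : Prop :=
  ∀ a b c d : X, P4 a b c d →
    (Q a b c d ∨ Q a c b d ∨ Q a d b c) ∧
    ¬(Q a b c d ∧ Q a c b d) ∧ ¬(Q a b c d ∧ Q a d b c) ∧ ¬(Q a c b d ∧ Q a d b c)

/-- `δ` generates the quartet `xy|zu`. -/
def Generates (δ : X → X → X → Option M) (x y z u : X) : Prop :=
  P4 x y z u ∧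
  ((δ x z u = δ y z u ∧ δ y z u ≠ δ x y z ∧ δ x y z = δ x y u) ∨
   (δ x y z = δ x y u ∧ δ x y u = δ x z u ∧ δ x z u = δ y z u ∧
    ∃ e : X, δ x y e = δ x y z ∧ δ z u e = δ x y z ∧
      δ x u e ≠ δ x y z ∧ δ x u e = δ x z e ∧ δ x z e = δ y z e ∧ δ y z e = δ y u e))

/-- A rooted phylogenetic tree on `X` with root `ρ`: a tree whose leaves (in the rooted
sense: out-degree 0, i.e. non-root vertices of degree 1) are exactly the image of `X`,
and with no non-root vertex of in-degree one and out-degree one (i.e. degree 2). -/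
structure IsRootedPhyloTree (G : SimpleGraph V) (ρ : V) (leaf : X → V) : Prop where
  isTree : G.IsTree
  leaf_inj : Function.Injective leaf
  leaf_iff : ∀ v : V, (∃ x : X, leaf x = v) ↔ (v ≠ ρ ∧ deg G v = 1)
  no_in_out_deg_one : ∀ v : V, v ≠ ρ → deg G v ≠ 2

/-- `d` is the binary map induced by the rooted dated tree:
`d x y = t (lca x y)`, where the last common ancestor is the median of `ρ, x, y`. -/
def InducedD (G : SimpleGraph V) (ρ : V) (leaf : X → V) (t : V → Option M)
    (d : X → X → Option M) : Prop :=
  ∀ x y : X, ∃ m : V, IsMedian G ρ (leaf x) (leaf y) m ∧ d x y = t m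

/-- Symbolic ultrametric: conditions (U1)-(U4). -/
def IsSymbolicUltrametric (d : X → X → Option M) : Prop :=
  (∀ x y : X, d x y = none ↔ x = y) ∧
  (∀ x y : X, d x y = d y x) ∧
  (∀ x y z : X, ({d x y, d x z, d y z} : Set (Option M)).ncard ≤ 2) ∧
  ¬ ∃ x y u v : X, P4 x y u v ∧ d x y = d y u ∧ d y u = d u v ∧
      d u v ≠ d y v ∧ d y v = d x v ∧ d x v = d x u

/-- `x` and `y` are `m`-equivalent with respect to `δ`. -/
def MEquiv (δ : X → X → X → Option M) (m : Option M) (x y : X) : Prop :=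
  (∃ z : X, δ x y z = m) ∧
  ∀ u v : X, u ≠ x → u ≠ y → v ≠ x → v ≠ y → (δ x u v = m ↔ δ y u v = m)

/-- `x ∼_δ y`: `x` and `y` are `m`-equivalent for some `m`. -/
def DeltaEquiv (δ : X → X → X → Option M) (x y : X) : Prop :=
  ∃ m : Option M, MEquiv δ m x y

/-- `C` is a pseudo-cherry of the tree: `C` has at least 2 elements and is exactly the
set of leaves adjacent to some interior vertex `v`. -/
def IsPseudoCherry (G : SimpleGraph V) (leaf : X → V) (C : Set X) : Prop :=
  2 ≤ C.ncard ∧ ∃ v : V, 2 ≤ deg G v ∧ C = {x : X | G.Adj (leaf x) v}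

open SimpleGraph

section TreeBasics

set_option linter.unusedSectionVars false
variable {V : Type} [DecidableEq V] {G : SimpleGraph V}

noncomputable def tpath (hG : G.IsTree) (x y : V) : G.Walk x y :=
  (hG.existsUnique_path x y).choose

variable (hG : G.IsTree)

lemma tpath_isPath (x y : V) : (tpath hG x y).IsPath :=
  (hG.existsUnique_path x y).choose_spec.1

lemma tpath_unique {x y : V} (p : G.Walk x y) (hp : p.IsPath) : p = tpath hG x y :=
  (hG.existsUnique_path x y).choose_spec.2 p hp

lemma tpath_nil (x : V) : tpath hG x x = Walk.nil :=
  (tpath_unique hG _ (Walk.IsPath.nil)).symm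

lemma tpath_reverse (x y : V) : (tpath hG x y).reverse = tpath hG y x :=
  tpath_unique hG _ ((tpath_isPath hG x y).reverse)

lemma mem_tpath_symm {x y v : V} :
    v ∈ (tpath hG x y).support ↔ v ∈ (tpath hG y x).support := by
  rw [← tpath_reverse hG x y, Walk.support_reverse, List.mem_reverse]

lemma isPath_append {x y z : V} {p : G.Walk x y} {q : G.Walk y z}
    (hp : p.IsPath) (hq : q.IsPath)
    (h : ∀ v, v ∈ p.support → v ∈ q.support → v = y) : (p.append q).IsPath := by
  rw [Walk.isPath_def, Walk.support_append]
  refine List.Nodup.append hp.support_nodup (hq.support_nodup.sublist (List.tail_sublist _)) ?_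
  intro v hv hv'
  have := h v hv (List.mem_of_mem_tail hv')
  subst this
  have := hq.support_nodup
  rw [Walk.support_eq_cons] at this
  exact (List.nodup_cons.mp this).1 hv'

lemma tpath_takeUntil {x y v : V} (h : v ∈ (tpath hG x y).support) :
    (tpath hG x y).takeUntil v h = tpath hG x v :=
  tpath_unique hG _ ((tpath_isPath hG x y).takeUntil h)

lemma tpath_dropUntil {x y v : V} (h : v ∈ (tpath hG x y).support) :
    (tpath hG x y).dropUntil v h = tpath hG v y :=
  tpath_unique hG _ ((tpath_isPath hG x y).dropUntil h)

lemma tpath_append_spec {x y v : V} (h : v ∈ (tpath hG x y).support) :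
    (tpath hG x v).append (tpath hG v y) = tpath hG x y := by
  rw [← tpath_takeUntil hG h, ← tpath_dropUntil hG h]
  exact (tpath hG x y).take_spec h

lemma mem_tpath_append {x y v w : V} (h : v ∈ (tpath hG x y).support) :
    w ∈ (tpath hG x y).support ↔
      w ∈ (tpath hG x v).support ∨ w ∈ (tpath hG v y).support := by
  rw [← tpath_append_spec hG h, Walk.mem_support_append_iff]

lemma tpath_subset_left {x y v : V} (h : v ∈ (tpath hG x y).support) :
    ∀ w ∈ (tpath hG x v).support, w ∈ (tpath hG x y).support := by
  intro w hw; exact (mem_tpath_append hG h).2 (Or.inl hw)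

lemma tpath_subset_right {x y v : V} (h : v ∈ (tpath hG x y).support) :
    ∀ w ∈ (tpath hG v y).support, w ∈ (tpath hG x y).support := by
  intro w hw; exact (mem_tpath_append hG h).2 (Or.inr hw)

lemma tpath_disjoint {x y v : V} (h : v ∈ (tpath hG x y).support) :
    ∀ w, w ∈ (tpath hG x v).support → w ∈ (tpath hG v y).support → w = v := by
  intro w h1 h2
  have hnd : ((tpath hG x v).append (tpath hG v y)).IsPath := by
    rw [tpath_append_spec hG h]; exact tpath_isPath hG x y
  rw [Walk.isPath_def, Walk.support_append] at hnd
  by_contra hne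
  have h2' : w ∈ (tpath hG v y).support.tail := by
    have h3 := h2
    rw [Walk.support_eq_cons] at h3
    rcases List.mem_cons.mp h3 with rfl | h4
    · exact absurd rfl hne
    · exact h4
  exact (List.disjoint_of_nodup_append hnd) h1 h2'

lemma tpath_antisymm {x m m' : V} (h1 : m' ∈ (tpath hG x m).support)
    (h2 : m ∈ (tpath hG x m').support) : m = m' := by
  have e1 := congrArg Walk.length (tpath_append_spec hG h1)
  have e2 := congrArg Walk.length (tpath_append_spec hG h2)
  rw [Walk.length_append] at e1 e2
  have : (tpath hG m' m).length = 0 := by omega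
  exact (Walk.eq_of_length_eq_zero this).symm

lemma tpath_trichotomy {x y m m' : V} (hm : m ∈ (tpath hG x y).support)
    (hm' : m' ∈ (tpath hG x y).support) :
    m' ∈ (tpath hG x m).support ∨ m ∈ (tpath hG x m').support := by
  rcases (mem_tpath_append hG hm).1 hm' with h | h
  · exact Or.inl h
  · right
    have hpath : ((tpath hG x m).append (tpath hG m m')).IsPath := by
      refine isPath_append (tpath_isPath _ _ _) (tpath_isPath _ _ _) ?_
      intro c hc1 hc2
      exact tpath_disjoint hG hm c hc1 (tpath_subset_left hG h c hc2)
    have := tpath_unique hG _ hpath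
    have hmem : m ∈ ((tpath hG x m).append (tpath hG m m')).support := by
      rw [Walk.mem_support_append_iff]; exact Or.inl (Walk.end_mem_support _)
    rwa [this] at hmem

/-- Scan a walk for the last decomposition point in `S`. -/
lemma exists_last_mem {x z : V} (r : G.Walk x z) (S : Set V)
    (h : ∃ v ∈ r.support, v ∈ S) :
    ∃ (m : V) (r1 : G.Walk x m) (r2 : G.Walk m z),
      r = r1.append r2 ∧ m ∈ S ∧ ∀ v ∈ r2.support, v ∈ S → v = m := by
  induction r with
  | nil =>
    obtain ⟨v, hv, hvS⟩ := h
    rw [Walk.mem_support_nil_iff] at hv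
    subst hv
    exact ⟨v, Walk.nil, Walk.nil, rfl, hvS, by
      intro w hw hwS
      rwa [Walk.mem_support_nil_iff] at hw⟩
  | @cons a b c hadj r' ih =>
    by_cases h' : ∃ v ∈ r'.support, v ∈ S
    · obtain ⟨m, r1, r2, hdec, hmS, hlast⟩ := ih h'
      exact ⟨m, Walk.cons hadj r1, r2, by rw [Walk.cons_append, hdec], hmS, hlast⟩
    · obtain ⟨v, hv, hvS⟩ := h
      rw [Walk.support_cons, List.mem_cons] at hv
      rcases hv with rfl | hv
      · refine ⟨v, Walk.nil, Walk.cons hadj r', rfl, hvS, ?_⟩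
        intro w hw hwS
        rw [Walk.support_cons, List.mem_cons] at hw
        rcases hw with rfl | hw
        · rfl
        · exact absurd ⟨w, hw, hwS⟩ h'
      · exact absurd ⟨v, hv, hvS⟩ h'

/-! ### Medians -/

lemma exists_med (x y z : V) :
    ∃ m, m ∈ (tpath hG x y).support ∧ m ∈ (tpath hG y z).support ∧
      m ∈ (tpath hG x z).support := by
  obtain ⟨m, r1, r2, hdec, hmS, hlast⟩ := exists_last_mem (tpath hG x z)
    {v | v ∈ (tpath hG x y).support}
    ⟨x, Walk.start_mem_support _, Walk.start_mem_support _⟩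
  have hr2 : r2.IsPath := by
    have := tpath_isPath hG x z
    rw [hdec] at this
    exact this.of_append_right
  have hmz : m ∈ (tpath hG x z).support := by
    rw [hdec, Walk.mem_support_append_iff]
    exact Or.inr (Walk.start_mem_support _)
  have hmy : m ∈ (tpath hG m y).support := Walk.start_mem_support _
  have hq : (((tpath hG m y).reverse).append r2).IsPath := by
    refine isPath_append ((tpath_isPath hG m y).reverse) hr2 ?_
    intro v hv hv'
    rw [Walk.support_reverse, List.mem_reverse] at hv
    exact hlast v hv' (tpath_subset_right hG hmS v hv)
  have := tpath_unique hG _ hq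
  refine ⟨m, hmS, ?_, hmz⟩
  rw [← this, Walk.mem_support_append_iff]
  exact Or.inr (Walk.start_mem_support _)

noncomputable def med (x y z : V) : V := (exists_med hG x y z).choose

lemma med_mem₁₂ (x y z : V) : med hG x y z ∈ (tpath hG x y).support :=
  (exists_med hG x y z).choose_spec.1

lemma med_mem₂₃ (x y z : V) : med hG x y z ∈ (tpath hG y z).support :=
  (exists_med hG x y z).choose_spec.2.1

lemma med_mem₁₃ (x y z : V) : med hG x y z ∈ (tpath hG x z).support :=
  (exists_med hG x y z).choose_spec.2.2

lemma eq_of_two_segments {u w m m' : V} (hm : m ∈ (tpath hG u w).support)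
    (h1 : m' ∈ (tpath hG u m).support) (h2 : m' ∈ (tpath hG w m).support) : m' = m :=
  tpath_disjoint hG hm m' h1 ((mem_tpath_symm hG).1 h2)

lemma med_unique' {x y z m m' : V}
    (h1 : m ∈ (tpath hG x y).support) (h2 : m ∈ (tpath hG y z).support)
    (h3 : m ∈ (tpath hG x z).support)
    (h1' : m' ∈ (tpath hG x y).support) (h2' : m' ∈ (tpath hG y z).support)
    (h3' : m' ∈ (tpath hG x z).support) : m = m' := by
  have hxy := tpath_trichotomy hG h1 h1'
  have hyz := tpath_trichotomy hG h2 h2'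
  have hzx := tpath_trichotomy hG ((mem_tpath_symm hG).1 h3) ((mem_tpath_symm hG).1 h3')
  rcases hxy with hp | hq
  · rcases hyz with hr | hs
    · exact (eq_of_two_segments hG h1 hp hr).symm
    · rcases hzx with ht | hu
      · exact (eq_of_two_segments hG h3 hp ht).symm
      · exact eq_of_two_segments hG h2' hs hu
  · rcases hyz with hr | hs
    · rcases hzx with ht | hu
      · exact (eq_of_two_segments hG h2 hr ht).symm
      · exact eq_of_two_segments hG h3' hq hu
    · exact eq_of_two_segments hG h1' hq hs

lemma eq_med {x y z m : V}
    (h1 : m ∈ (tpath hG x y).support) (h2 : m ∈ (tpath hG y z).support)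
    (h3 : m ∈ (tpath hG x z).support) : m = med hG x y z :=
  med_unique' hG h1 h2 h3 (med_mem₁₂ hG x y z) (med_mem₂₃ hG x y z) (med_mem₁₃ hG x y z)

lemma med_swap₁₂ (x y z : V) : med hG x y z = med hG y x z :=
  eq_med hG ((mem_tpath_symm hG).1 (med_mem₁₂ hG x y z)) (med_mem₁₃ hG x y z)
    (med_mem₂₃ hG x y z)

lemma med_swap₂₃ (x y z : V) : med hG x y z = med hG x z y :=
  eq_med hG (med_mem₁₃ hG x y z) ((mem_tpath_symm hG).1 (med_mem₂₃ hG x y z))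
    (med_mem₁₂ hG x y z)

lemma med_swap₁₃ (x y z : V) : med hG x y z = med hG z y x :=
  eq_med hG ((mem_tpath_symm hG).1 (med_mem₂₃ hG x y z))
    ((mem_tpath_symm hG).1 (med_mem₁₂ hG x y z)) ((mem_tpath_symm hG).1 (med_mem₁₃ hG x y z))

/-! ### Second vertex of a tree path -/

lemma getVert_one_append {x y z : V} {p : G.Walk x y} {q : G.Walk y z}
    (hp : p.length ≠ 0) : (p.append q).getVert 1 = p.getVert 1 := by
  rw [Walk.getVert_append]
  rcases Nat.lt_or_ge 1 p.length with h | h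
  · rw [if_pos h]
  · have hl : p.length = 1 := by omega
    rw [if_neg (by omega), hl]
    have := Walk.getVert_length p
    rw [hl] at this
    simp [this]

noncomputable def tsnd (x y : V) : V := (tpath hG x y).getVert 1

lemma adj_tsnd {x y : V} (h : x ≠ y) : G.Adj x (tsnd hG x y) :=
  Walk.adj_snd (Walk.not_nil_of_ne h)

lemma tsnd_ne {x y : V} (h : x ≠ y) : tsnd hG x y ≠ x := (adj_tsnd hG h).ne'

lemma tail_tpath {x y : V} (h : x ≠ y) :
    (tpath hG x y).tail = tpath hG (tsnd hG x y) y := by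
  refine tpath_unique hG _ ((tpath_isPath hG x y).tail)

lemma tsnd_mem {x y : V} (h : x ≠ y) : tsnd hG x y ∈ (tpath hG x y).support := by
  have hcons := Walk.cons_support_tail (p := tpath hG x y) (Walk.not_nil_of_ne h)
  rw [← hcons]
  exact List.mem_cons_of_mem _ (Walk.start_mem_support _)

lemma not_mem_tail_tpath {x y : V} (h : x ≠ y) :
    x ∉ (tpath hG (tsnd hG x y) y).support := by
  rw [← tail_tpath hG h]
  have hnd := (tpath_isPath hG x y).support_nodup
  rw [← Walk.cons_support_tail (p := tpath hG x y) (Walk.not_nil_of_ne h)] at hnd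
  exact (List.nodup_cons.mp hnd).1

lemma tpath_of_adj {x y : V} (h : G.Adj x y) :
    tpath hG x y = Walk.cons h Walk.nil := by
  refine (tpath_unique hG _ ?_).symm
  rw [Walk.isPath_def]
  simp [h.ne]

lemma support_tpath_of_adj {x y : V} (h : G.Adj x y) :
    (tpath hG x y).support = [x, y] := by rw [tpath_of_adj hG h]; rfl

lemma tsnd_eq_of_adj {x y : V} (h : G.Adj x y) : tsnd hG x y = y := by
  unfold tsnd
  rw [tpath_of_adj hG h]
  rfl

lemma tsnd_prefix {x y c : V} (hc : c ∈ (tpath hG x y).support) (hcx : c ≠ x) :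
    tsnd hG x y = tsnd hG x c := by
  unfold tsnd
  rw [← tpath_append_spec hG hc]
  exact getVert_one_append (by
    intro h0
    exact hcx ((Walk.eq_of_length_eq_zero h0).symm ▸ rfl))

lemma branch_disjoint {m x y : V} (hx : m ≠ x) (hy : m ≠ y)
    (h : tsnd hG m x ≠ tsnd hG m y) :
    (∀ c, c ∈ (tpath hG m x).support → c ∈ (tpath hG m y).support → c = m) ∧
      m ∈ (tpath hG x y).support := by
  have hdisj : ∀ c, c ∈ (tpath hG m x).support → c ∈ (tpath hG m y).support → c = m := by
    intro c hc1 hc2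
    by_contra hcm
    exact h ((tsnd_prefix hG hc1 hcm).trans (tsnd_prefix hG hc2 hcm).symm)
  refine ⟨hdisj, ?_⟩
  have hpath : ((tpath hG x m).append (tpath hG m y)).IsPath := by
    refine isPath_append (tpath_isPath _ _ _) (tpath_isPath _ _ _) ?_
    intro v hv1 hv2
    exact hdisj v ((mem_tpath_symm hG).1 hv1) hv2
  rw [← tpath_unique hG _ hpath, Walk.mem_support_append_iff]
  exact Or.inl (Walk.end_mem_support _)

/-! ### Degrees -/

variable [Fintype V]

lemma two_le_deg_of_adj {v a b : V} (h1 : G.Adj v a) (h2 : G.Adj v b) (hab : a ≠ b) :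
    2 ≤ deg G v := by
  have : ({a, b} : Set V) ⊆ G.neighborSet v := by
    intro c hc; rcases hc with rfl | hc
    · exact h1
    · rw [Set.mem_singleton_iff] at hc; subst hc; exact h2
  calc 2 = ({a, b} : Set V).ncard := (Set.ncard_pair hab).symm
    _ ≤ _ := Set.ncard_le_ncard this (Set.toFinite _)

lemma exists_third_nbr {v : V} (h : 3 ≤ deg G v) (a b : V) :
    ∃ c, G.Adj v c ∧ c ≠ a ∧ c ≠ b := by
  by_contra hc
  push_neg at hc
  have hsub : G.neighborSet v ⊆ {a, b} := by
    intro c hcadj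
    by_cases hca : c = a
    · exact Or.inl hca
    · exact Or.inr (hc c hcadj hca)
  have := Set.ncard_le_ncard hsub (Set.toFinite _)
  have h2 : ({a, b} : Set V).ncard ≤ 2 := by
    refine le_trans (Set.ncard_insert_le _ _) ?_
    simp
  unfold deg at h
  omega

lemma deg_one_unique {v a b : V} (h : deg G v = 1) (ha : G.Adj v a) (hb : G.Adj v b) :
    a = b := by
  unfold deg at h
  obtain ⟨c, hc⟩ := Set.ncard_eq_one.mp h
  have ha' : a ∈ G.neighborSet v := ha
  have hb' : b ∈ G.neighborSet v := hb
  rw [hc] at ha' hb'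
  rw [Set.mem_singleton_iff] at ha' hb'
  rw [ha', hb']

lemma two_le_deg_interior {x y m : V} (h : m ∈ (tpath hG x y).support)
    (hx : m ≠ x) (hy : m ≠ y) : 2 ≤ deg G m := by
  refine two_le_deg_of_adj (adj_tsnd hG hx) (adj_tsnd hG hy) ?_
  intro heq
  have hc1 := tsnd_mem hG hx
  have hc2 := tsnd_mem hG hy
  rw [heq] at hc1
  exact tsnd_ne hG hy
    (tpath_disjoint hG h (tsnd hG m y) ((mem_tpath_symm hG).1 hc1) hc2)

/-! ### Leaves beyond a neighbor -/

lemma exists_leaf_beyond {v u : V} (hadj : G.Adj v u) :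
    ∃ w : V, deg G w = 1 ∧ v ≠ w ∧ tsnd hG v w = u := by
  classical
  set F : Finset V := Finset.univ.filter (fun w => v ≠ w ∧ tsnd hG v w = u) with hF
  have huF : u ∈ F := by
    simp only [hF, Finset.mem_filter, Finset.mem_univ, true_and]
    exact ⟨hadj.ne, tsnd_eq_of_adj hG hadj⟩
  obtain ⟨w, hwF, hmax⟩ := F.exists_max_image (fun w => (tpath hG v w).length) ⟨u, huF⟩
  simp only [hF, Finset.mem_filter, Finset.mem_univ, true_and] at hwF
  obtain ⟨hvw, hsnd⟩ := hwF
  refine ⟨w, ?_, hvw, hsnd⟩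
  have hlen0 : (tpath hG v w).length ≠ 0 := by
    intro h0; exact hvw (Walk.eq_of_length_eq_zero h0)
  have key : ∀ t, G.Adj w t → t ∈ (tpath hG v w).support ∧
      (tpath hG v t).length + 1 = (tpath hG v w).length := by
    intro t ht
    have hmem : t ∈ (tpath hG v w).support := by
      by_contra htmem
      have hq : ((tpath hG v w).append (Walk.cons ht Walk.nil)).IsPath := by
        refine isPath_append (tpath_isPath hG v w) ?_ ?_
        · rw [Walk.isPath_def]; simp [ht.ne]
        · intro c hc1 hc2
          simp only [Walk.support_cons, Walk.support_nil, List.mem_cons,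
            List.not_mem_nil, or_false] at hc2
          rcases hc2 with h | h
          · exact h
          · exact absurd (h ▸ hc1) htmem
      have hvt : v ≠ t := by
        rintro rfl; exact htmem (Walk.start_mem_support _)
      have heq := tpath_unique hG _ hq
      have hsnd' : tsnd hG v t = u := by
        unfold tsnd
        rw [← heq, getVert_one_append hlen0]
        exact hsnd
      have htF : t ∈ F := by
        simp only [hF, Finset.mem_filter, Finset.mem_univ, true_and]
        exact ⟨hvt, hsnd'⟩
      have := hmax t htF
      have hlen := congrArg Walk.length heq
      rw [Walk.length_append] at hlen
      simp only [Walk.length_cons, Walk.length_nil] at hlen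
      omega
    refine ⟨hmem, ?_⟩
    have hdec := congrArg Walk.length (tpath_append_spec hG hmem)
    rw [Walk.length_append] at hdec
    rw [tpath_of_adj hG ht.symm] at hdec
    simp only [Walk.length_cons, Walk.length_nil] at hdec
    omega
  have hwv : w ≠ v := Ne.symm hvw
  have hadjt0 : G.Adj w (tsnd hG w v) := adj_tsnd hG hwv
  have hsingle : ∀ t, G.Adj w t → t = tsnd hG w v := by
    intro t ht
    obtain ⟨hmem, hlen⟩ := key t ht
    obtain ⟨hmem0, hlen0'⟩ := key _ hadjt0
    rcases tpath_trichotomy hG hmem hmem0 with h | h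
    · -- tsnd w v ∈ s(v,t)
      have hq := congrArg Walk.length (tpath_append_spec hG h)
      rw [Walk.length_append] at hq
      have h0 : (tpath hG (tsnd hG w v) t).length = 0 := by omega
      exact (Walk.eq_of_length_eq_zero h0).symm
    · have hq := congrArg Walk.length (tpath_append_spec hG h)
      rw [Walk.length_append] at hq
      have h0 : (tpath hG t (tsnd hG w v)).length = 0 := by omega
      exact Walk.eq_of_length_eq_zero h0
  have : G.neighborSet w = {tsnd hG w v} := by
    ext c
    constructor
    · intro hc; exact hsingle c hc
    · intro hc
      rw [Set.mem_singleton_iff] at hc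
      subst hc; exact hadjt0
  unfold deg
  rw [this]
  exact Set.ncard_singleton _

/-! ### Median branches and the separation lemma -/

lemma med_branch {x y z v : V} (hv : v ∈ (tpath hG (med hG x y z) z).support)
    (hv' : v ∈ (tpath hG x y).support) : v = med hG x y z := by
  rcases (mem_tpath_append hG (med_mem₁₂ hG x y z)).1 hv' with h | h
  · exact tpath_disjoint hG (med_mem₁₃ hG x y z) v h hv
  · exact tpath_disjoint hG (med_mem₂₃ hG x y z) v ((mem_tpath_symm hG).1 h) hv

lemma sep_lemma {x y c d : V}
    (hmm' : med hG x y c ∈ (tpath hG x (med hG x y d)).support)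
    (hne : med hG x y c ≠ med hG x y d) :
    ∀ v, v ∈ (tpath hG x c).support → v ∈ (tpath hG y d).support → False := by
  set m := med hG x y c with hm
  set m' := med hG x y d with hm'
  intro v hvc hvd
  rcases (mem_tpath_append hG (med_mem₁₃ hG x y c)).1 hvc with h1 | h1 <;>
    rcases (mem_tpath_append hG (med_mem₂₃ hG x y d)).1 hvd with h2 | h2
  · -- v ∈ s(x,m) ∩ s(y,m')
    have hvm' : v ∈ (tpath hG x m').support := tpath_subset_left hG hmm' v h1
    have : v = m' := tpath_disjoint hG (med_mem₁₂ hG x y d) v hvm' ((mem_tpath_symm hG).1 h2)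
    subst this
    exact hne (tpath_antisymm hG h1 hmm')
  · -- v ∈ s(x,m) ∩ s(m',d)
    have hvxy : v ∈ (tpath hG x y).support := tpath_subset_left hG (med_mem₁₂ hG x y c) v h1
    have : v = m' := med_branch hG h2 hvxy
    subst this
    exact hne (tpath_antisymm hG h1 hmm')
  · -- v ∈ s(m,c) ∩ s(y,m')
    have hvxy : v ∈ (tpath hG x y).support := by
      refine (mem_tpath_symm hG).1 ?_
      exact tpath_subset_left hG ((mem_tpath_symm hG).1 (med_mem₁₂ hG x y d)) v h2
    have hvm : v = m := med_branch hG h1 hvxy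
    rw [hvm] at h2
    exact hne (tpath_disjoint hG (med_mem₁₂ hG x y d) m hmm' ((mem_tpath_symm hG).1 h2))
  · -- v ∈ s(m,c) ∩ s(m',d) : scan argument
    have hscan := exists_last_mem (tpath hG c m) {t | t ∈ (tpath hG m' d).support}
      ⟨v, (mem_tpath_symm hG).1 h1, h2⟩
    obtain ⟨w, r1, r2, hdec, hwS, hlast⟩ := hscan
    have hr2path : r2.IsPath := by
      have := tpath_isPath hG c m
      rw [hdec] at this
      exact this.of_append_right
    have hr2sub : ∀ t ∈ r2.support, t ∈ (tpath hG m c).support := by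
      intro t htmem
      refine (mem_tpath_symm hG).1 ?_
      rw [hdec, Walk.mem_support_append_iff]
      exact Or.inr htmem
    have hD : (r2.reverse.append (tpath hG w m')).IsPath := by
      refine isPath_append hr2path.reverse (tpath_isPath hG w m') ?_
      intro t ht1 ht2
      rw [Walk.support_reverse, List.mem_reverse] at ht1
      refine hlast t ht1 ?_
      exact tpath_subset_left hG hwS t ((mem_tpath_symm hG).1 ht2)
    have hweq := tpath_unique hG _ hD
    have hwmm' : w ∈ (tpath hG m m').support := by
      rw [← hweq, Walk.mem_support_append_iff]
      exact Or.inl (by rw [Walk.support_reverse, List.mem_reverse]; exact Walk.start_mem_support _)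
    have hwxy : w ∈ (tpath hG x y).support := by
      refine tpath_subset_left hG (med_mem₁₂ hG x y d) w ?_
      exact tpath_subset_right hG hmm' w hwmm'
    have hwm : w = m := med_branch hG (hr2sub w (Walk.start_mem_support r2)) hwxy
    rw [hwm] at hwS
    exact hne (med_branch hG hwS (med_mem₁₂ hG x y c))

/-! ### Order along a path, and characterizations -/

lemma between_mem {x u v m : V} (hu : u ∈ (tpath hG x v).support)
    (hm1 : u ∈ (tpath hG x m).support) (hm2 : m ∈ (tpath hG x v).support)
    (hmu : m ≠ u) : m ∈ (tpath hG u v).support := by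
  rcases (mem_tpath_append hG hu).1 hm2 with h | h
  · exact absurd (tpath_antisymm hG h hm1) (Ne.symm hmu)
  · exact h

lemma med_ne_sep {x y c d : V} (hne : med hG x y c ≠ med hG x y d) :
    (∀ v, v ∈ (tpath hG x c).support → v ∈ (tpath hG y d).support → False) ∨
    (∀ v, v ∈ (tpath hG x d).support → v ∈ (tpath hG y c).support → False) := by
  rcases tpath_trichotomy hG (med_mem₁₂ hG x y c) (med_mem₁₂ hG x y d) with h | h
  · exact Or.inr (sep_lemma hG h (Ne.symm hne))
  · exact Or.inl (sep_lemma hG h hne)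

lemma med_eq_of_not_sep {x y c d : V}
    (h1 : ∃ v, v ∈ (tpath hG x c).support ∧ v ∈ (tpath hG y d).support → False)
    : True := trivial

lemma less_geo_to_formula {x p s t : V}
    (h1 : med hG x p s ∈ (tpath hG x (med hG x p t)).support)
    (h2 : med hG x p s ≠ med hG x p t) : med hG x s t = med hG x p s := by
  set ms := med hG x p s with hms
  set mt := med hG x p t with hmt
  have hmsxs : ms ∈ (tpath hG x s).support := med_mem₁₃ hG x p s
  have hmsxt : ms ∈ (tpath hG x t).support :=
    tpath_subset_left hG (med_mem₁₃ hG x p t) ms h1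
  have hsub_line : ∀ w ∈ (tpath hG ms mt).support, w ∈ (tpath hG x p).support := by
    intro w hw
    refine tpath_subset_left hG (med_mem₁₂ hG x p t) w ?_
    exact tpath_subset_right hG h1 w hw
  have hI : ((tpath hG ms mt).append (tpath hG mt t)).IsPath := by
    refine isPath_append (tpath_isPath _ _ _) (tpath_isPath _ _ _) ?_
    intro c hc1 hc2
    exact med_branch hG hc2 (hsub_line c hc1)
  have hIeq := tpath_unique hG _ hI
  have hmt_mem : mt ∈ (tpath hG ms t).support := by
    rw [← hIeq, Walk.mem_support_append_iff]
    exact Or.inl (Walk.end_mem_support _)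
  have hsep := sep_lemma hG h1 h2
  have hW : ((tpath hG s ms).append (tpath hG ms t)).IsPath := by
    refine isPath_append (tpath_isPath _ _ _) (tpath_isPath _ _ _) ?_
    intro c hc1 hc2
    rcases (mem_tpath_append hG hmt_mem).1 hc2 with h | h
    · exact med_branch hG ((mem_tpath_symm hG).1 hc1) (hsub_line c h)
    · exfalso
      refine hsep c ?_ ?_
      · exact tpath_subset_right hG hmsxs c ((mem_tpath_symm hG).1 hc1)
      · exact tpath_subset_right hG (med_mem₂₃ hG x p t) c h
  have hWeq := tpath_unique hG _ hW
  have hmem_st : ms ∈ (tpath hG s t).support := by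
    rw [← hWeq, Walk.mem_support_append_iff]
    exact Or.inl (Walk.end_mem_support _)
  exact (eq_med hG hmsxs hmem_st hmsxt).symm

lemma less_formula_to_geo {x p s t : V}
    (h1 : med hG x s t = med hG x p s) (h2 : med hG x p s ≠ med hG x p t) :
    med hG x p s ∈ (tpath hG x (med hG x p t)).support := by
  rcases tpath_trichotomy hG (med_mem₁₂ hG x p t) (med_mem₁₂ hG x p s) with h | h
  · exact h
  · exfalso
    have := less_geo_to_formula hG h (Ne.symm h2)
    have heq : med hG x s t = med hG x t s := by
      rw [med_swap₂₃]
    exact h2 (h1.symm.trans (heq.trans this))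

/-! ### The gap lemma -/

lemma med_of_third_branch {x p w n3 l : V} (hw : w ∈ (tpath hG x p).support)
    (hwx : w ≠ x) (hwp : w ≠ p)
    (h3x : n3 ≠ tsnd hG w x) (h3p : n3 ≠ tsnd hG w p)
    (hsndl : tsnd hG w l = n3) (hwl : w ≠ l) : w = med hG x p l := by
  have hxl := branch_disjoint hG hwx hwl (by rw [hsndl]; exact fun hh => h3x hh.symm)
  have hpl := branch_disjoint hG hwp hwl (by rw [hsndl]; exact fun hh => h3p hh.symm)
  exact eq_med hG hw hpl.2 hxl.2

lemma gap_lemma {x p u v : V}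
    (hdeg : ∀ w, w ∈ (tpath hG x p).support → w ≠ x → w ≠ p → 3 ≤ deg G w)
    (hu : u ∈ (tpath hG x v).support) (hv : v ∈ (tpath hG x p).support)
    (huv : u ≠ v) (hvp : v ≠ p) (hnadj : ¬ G.Adj u v) :
    ∃ w n3, w ∈ (tpath hG x p).support ∧ w ≠ x ∧ w ≠ p ∧ w ≠ u ∧ w ≠ v ∧
      u ∈ (tpath hG x w).support ∧ w ∈ (tpath hG x v).support ∧
      G.Adj w n3 ∧ n3 ≠ tsnd hG w x ∧ n3 ≠ tsnd hG w p := by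
  set w := tsnd hG u v with hwdef
  have hadjuw : G.Adj u w := adj_tsnd hG huv
  have hwu : w ≠ u := tsnd_ne hG huv
  have hwv : w ≠ v := by
    intro h; rw [h] at hadjuw; exact hnadj hadjuw
  have hwuv : w ∈ (tpath hG u v).support := tsnd_mem hG huv
  have hwxv : w ∈ (tpath hG x v).support := tpath_subset_right hG hu w hwuv
  have hwxp : w ∈ (tpath hG x p).support := tpath_subset_left hG hv w hwxv
  have hwx : w ≠ x := by
    intro h
    rw [h] at hwuv
    have : x = u := tpath_disjoint hG hu x (Walk.start_mem_support _) hwuv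
    rw [h] at hwu
    exact hwu this
  have hwp : w ≠ p := by
    intro h
    rw [h] at hwxv
    have : p = v := tpath_disjoint hG hv p hwxv (Walk.end_mem_support _)
    rw [h] at hwv
    exact hwv this
  have huxw : u ∈ (tpath hG x w).support := by
    have hA : ((tpath hG x u).append (tpath hG u w)).IsPath := by
      refine isPath_append (tpath_isPath _ _ _) (tpath_isPath _ _ _) ?_
      intro c hc1 hc2
      refine tpath_disjoint hG hu c hc1 ?_
      exact tpath_subset_left hG hwuv c hc2
    rw [← tpath_unique hG _ hA, Walk.mem_support_append_iff]
    exact Or.inl (Walk.end_mem_support _)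
  obtain ⟨n3, hn3adj, hn3x, hn3p⟩ :=
    exists_third_nbr (hdeg w hwxp hwx hwp) (tsnd hG w x) (tsnd hG w p)
  exact ⟨w, n3, hwxp, hwx, hwp, hwu, hwv, huxw, hwxv, hn3adj, hn3x, hn3p⟩

lemma mem_tpath_self {x v : V} (h : v ∈ (tpath hG x x).support) : v = x := by
  rw [tpath_nil hG x] at h
  simpa using h

lemma tpath_support_union {x y z v : V} (h : v ∈ (tpath hG x z).support) :
    v ∈ (tpath hG x y).support ∨ v ∈ (tpath hG y z).support := by
  have hW : ((tpath hG x y).append (tpath hG y z)).bypass.IsPath := Walk.bypass_isPath _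
  have := tpath_unique hG _ hW
  rw [← this] at h
  have := Walk.support_bypass_subset _ h
  rwa [Walk.mem_support_append_iff] at this

lemma med_on_pair {x y z p q : V}
    (hp : p = x ∨ p = y ∨ p = z) (hq : q = x ∨ q = y ∨ q = z) (hpq : p ≠ q) :
    med hG x y z ∈ (tpath hG p q).support := by
  have h12 := med_mem₁₂ hG x y z
  have h23 := med_mem₂₃ hG x y z
  have h13 := med_mem₁₃ hG x y z
  rcases hp with rfl | rfl | rfl <;> rcases hq with rfl | rfl | rfl <;>
    first
      | exact absurd rfl hpq
      | assumption
      | exact (mem_tpath_symm hG).1 (by assumption)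

lemma tsnd_cons {u v y : V} (hadj : G.Adj u v) (h : u ∉ (tpath hG v y).support) :
    tsnd hG u y = v := by
  have hW : (Walk.cons hadj (tpath hG v y)).IsPath :=
    Walk.IsPath.cons (tpath_isPath hG v y) h
  have := tpath_unique hG _ hW
  unfold tsnd
  rw [← this]
  rw [Walk.getVert_cons_succ, Walk.getVert_zero]

end TreeBasics







/-! ### Phylogenetic trees -/

section PhyloSingle
set_option linter.unusedSectionVars false

variable {V X : Type} [DecidableEq V] [Fintype V] [Fintype X] [DecidableEq X]
variable {G : SimpleGraph V} {leaf : X → V}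

lemma three_le_card_V (hT : IsPhyloTree G leaf) (hX : 3 ≤ Fintype.card X) :
    3 ≤ Fintype.card V :=
  le_trans hX (Fintype.card_le_of_injective leaf hT.leaf_inj)

lemma deg_pos (hT : IsPhyloTree G leaf) (hX : 3 ≤ Fintype.card X) (v : V) :
    1 ≤ deg G v := by
  have hcard : 1 < Fintype.card V := by have := three_le_card_V hT hX; omega
  obtain ⟨w, hw⟩ := Fintype.exists_ne_of_one_lt_card hcard v
  have hadj : G.Adj v (tsnd hT.isTree v w) := adj_tsnd hT.isTree (Ne.symm hw)
  have : 0 < deg G v := by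
    unfold deg
    rw [Set.ncard_pos (Set.toFinite _)]
    exact ⟨_, hadj⟩
  omega

lemma deg_ge_three (hT : IsPhyloTree G leaf) (hX : 3 ≤ Fintype.card X) {v : V}
    (h : ∀ e, leaf e ≠ v) : 3 ≤ deg G v := by
  have h1 : deg G v ≠ 1 := by
    intro hd
    obtain ⟨e, he⟩ := (hT.leaf_iff v).2 hd
    exact h e he
  have h2 := hT.no_deg_two v
  have h3 := deg_pos hT hX v
  omega

lemma med_not_leaf (hT : IsPhyloTree G leaf) {a b c : X}
    (hab : a ≠ b) (hac : a ≠ c) (hbc : b ≠ c) :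
    ∀ e, leaf e ≠ med hT.isTree (leaf a) (leaf b) (leaf c) := by
  intro e he
  set m := med hT.isTree (leaf a) (leaf b) (leaf c) with hm
  have hdeg : deg G m = 1 := by
    rw [← he]
    exact (hT.leaf_iff _).1 ⟨e, rfl⟩
  have hcase : ∀ x y : V, m ∈ (tpath hT.isTree x y).support → m = x ∨ m = y := by
    intro x y hmem
    by_contra hcon
    push_neg at hcon
    have := two_le_deg_interior hT.isTree hmem hcon.1 hcon.2
    omega
  rcases hcase _ _ (med_mem₁₂ hT.isTree (leaf a) (leaf b) (leaf c)) with h1 | h1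
  · rcases hcase _ _ (med_mem₂₃ hT.isTree (leaf a) (leaf b) (leaf c)) with h2 | h2
    · exact hab (hT.leaf_inj (h1.symm.trans h2))
    · exact hac (hT.leaf_inj (h1.symm.trans h2))
  · rcases hcase _ _ (med_mem₁₃ hT.isTree (leaf a) (leaf b) (leaf c)) with h2 | h2
    · exact hab (hT.leaf_inj (h2.symm.trans h1))
    · exact hbc (hT.leaf_inj (h1.symm.trans h2))

lemma internal_is_med (hT : IsPhyloTree G leaf) (hX : 3 ≤ Fintype.card X) {v : V}
    (h : ∀ e, leaf e ≠ v) :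
    ∃ a b c : X, a ≠ b ∧ a ≠ c ∧ b ≠ c ∧ v = med hT.isTree (leaf a) (leaf b) (leaf c) := by
  have hdeg := deg_ge_three hT hX h
  obtain ⟨u1, hu1, -, -⟩ := exists_third_nbr hdeg v v
  obtain ⟨u2, hu2, hu21, -⟩ := exists_third_nbr hdeg u1 u1
  obtain ⟨u3, hu3, hu31, hu32⟩ := exists_third_nbr hdeg u1 u2
  obtain ⟨w1, hw1deg, hvw1, hsnd1⟩ := exists_leaf_beyond hT.isTree hu1
  obtain ⟨w2, hw2deg, hvw2, hsnd2⟩ := exists_leaf_beyond hT.isTree hu2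
  obtain ⟨w3, hw3deg, hvw3, hsnd3⟩ := exists_leaf_beyond hT.isTree hu3
  obtain ⟨a, ha⟩ := (hT.leaf_iff w1).2 hw1deg
  obtain ⟨b, hb⟩ := (hT.leaf_iff w2).2 hw2deg
  obtain ⟨c, hc⟩ := (hT.leaf_iff w3).2 hw3deg
  have h12 : tsnd hT.isTree v w1 ≠ tsnd hT.isTree v w2 := by
    rw [hsnd1, hsnd2]; exact Ne.symm hu21
  have h13 : tsnd hT.isTree v w1 ≠ tsnd hT.isTree v w3 := by
    rw [hsnd1, hsnd3]; exact Ne.symm hu31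
  have h23 : tsnd hT.isTree v w2 ≠ tsnd hT.isTree v w3 := by
    rw [hsnd2, hsnd3]; exact Ne.symm hu32
  have hm12 := (branch_disjoint hT.isTree hvw1 hvw2 h12).2
  have hm23 := (branch_disjoint hT.isTree hvw2 hvw3 h23).2
  have hm13 := (branch_disjoint hT.isTree hvw1 hvw3 h13).2
  have hab : a ≠ b := by
    rintro rfl; rw [ha] at hb; rw [hb] at h12; exact h12 rfl
  have hac : a ≠ c := by
    rintro rfl; rw [ha] at hc; rw [hc] at h13; exact h13 rfl
  have hbc : b ≠ c := by
    rintro rfl; rw [hb] at hc; rw [hc] at h23; exact h23 rfl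
  refine ⟨a, b, c, hab, hac, hbc, ?_⟩
  rw [ha, hb, hc]
  exact eq_med hT.isTree hm12 hm23 hm13

lemma displays_iff (hT : IsPhyloTree G leaf) {a b c d : X} :
    Displays G leaf a b c d ↔
      ∀ v, v ∈ (tpath hT.isTree (leaf a) (leaf b)).support →
        v ∈ (tpath hT.isTree (leaf c) (leaf d)).support → False := by
  constructor
  · rintro ⟨p, hp, q, hq, hdisj⟩ v hv1 hv2
    rw [tpath_unique hT.isTree p hp] at hdisj
    exact hdisj v hv1 (by rw [tpath_unique hT.isTree q hq]; exact hv2)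
  · intro h
    exact ⟨tpath hT.isTree _ _, tpath_isPath _ _ _, tpath hT.isTree _ _,
      tpath_isPath _ _ _, fun v hv1 hv2 => h v hv1 hv2⟩

lemma med_agree_iff (hT : IsPhyloTree G leaf) {a b c d : X} :
    med hT.isTree (leaf a) (leaf b) (leaf c) = med hT.isTree (leaf a) (leaf b) (leaf d) ↔
      ¬ Displays G leaf a c b d ∧ ¬ Displays G leaf a d b c := by
  set hG := hT.isTree
  constructor
  · intro heq
    constructor
    · intro hD
      exact (displays_iff hT).1 hD _ (med_mem₁₃ hG (leaf a) (leaf b) (leaf c))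
        (by rw [heq]; exact med_mem₂₃ hG (leaf a) (leaf b) (leaf d))
    · intro hD
      exact (displays_iff hT).1 hD _
        (by rw [heq]; exact med_mem₁₃ hG (leaf a) (leaf b) (leaf d))
        (med_mem₂₃ hG (leaf a) (leaf b) (leaf c))
  · intro ⟨hD1, hD2⟩
    by_contra hne
    rcases med_ne_sep hG hne with h | h
    · exact hD1 ((displays_iff hT).2 h)
    · exact hD2 ((displays_iff hT).2 h)

lemma interior_deg_ge_three (hT : IsPhyloTree G leaf) (hX : 3 ≤ Fintype.card X)
    {x y w : V} (h : w ∈ (tpath hT.isTree x y).support) (hx : w ≠ x) (hy : w ≠ y) :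
    3 ≤ deg G w := by
  have h2 := two_le_deg_interior hT.isTree h hx hy
  have h3 := hT.no_deg_two w
  omega

lemma no_adjacent_leaves (hT : IsPhyloTree G leaf) (hX : 3 ≤ Fintype.card X)
    (x y : X) : ¬ G.Adj (leaf x) (leaf y) := by
  intro hadj
  have hxy : x ≠ y := by rintro rfl; exact hadj.ne rfl
  have hz : ∃ z : X, z ≠ x ∧ z ≠ y := by
    by_contra hcon
    push_neg at hcon
    have hsub : (Finset.univ : Finset X) ⊆ {x, y} := by
      intro z _
      simp only [Finset.mem_insert, Finset.mem_singleton]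
      by_cases hzx : z = x
      · exact Or.inl hzx
      · exact Or.inr (hcon z hzx)
    have hle := Finset.card_le_card hsub
    have h2 : ({x, y} : Finset X).card ≤ 2 :=
      le_trans (Finset.card_insert_le _ _) (by simp)
    simp only [Finset.card_univ] at hle
    omega
  obtain ⟨z, hzx, hzy⟩ := hz
  have hdx : deg G (leaf x) = 1 := (hT.leaf_iff _).1 ⟨x, rfl⟩
  have hdy : deg G (leaf y) = 1 := (hT.leaf_iff _).1 ⟨y, rfl⟩
  have hxz : leaf x ≠ leaf z := fun h => hzx (hT.leaf_inj h.symm)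
  have hyz : leaf y ≠ leaf z := fun h => hzy (hT.leaf_inj h.symm)
  have h1 : tsnd hT.isTree (leaf x) (leaf z) = leaf y :=
    deg_one_unique hdx (adj_tsnd hT.isTree hxz) hadj
  have h2 : tsnd hT.isTree (leaf y) (leaf z) = leaf x :=
    deg_one_unique hdy (adj_tsnd hT.isTree hyz) hadj.symm
  have h3 := not_mem_tail_tpath hT.isTree hxz
  rw [h1] at h3
  have h4 := tsnd_mem hT.isTree hyz
  rw [h2] at h4
  exact h3 h4

lemma ne_of_med_eq (hT : IsPhyloTree G leaf) {v : V} {a b c : X}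
    (hvim : ∀ e, leaf e ≠ v)
    (h : med hT.isTree (leaf a) (leaf b) (leaf c) = v) : a ≠ b ∧ a ≠ c ∧ b ≠ c := by
  refine ⟨?_, ?_, ?_⟩
  · rintro rfl
    have hm := med_mem₁₂ hT.isTree (leaf a) (leaf a) (leaf c)
    rw [h] at hm
    exact hvim a (mem_tpath_self hT.isTree hm).symm
  · rintro rfl
    have hm := med_mem₁₃ hT.isTree (leaf a) (leaf b) (leaf a)
    rw [h] at hm
    exact hvim a (mem_tpath_self hT.isTree hm).symm
  · rintro rfl
    have hm := med_mem₂₃ hT.isTree (leaf a) (leaf b) (leaf b)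
    rw [h] at hm
    exact hvim b (mem_tpath_self hT.isTree hm).symm

end PhyloSingle




section PhyloPair
set_option linter.unusedSectionVars false

variable {V₁ V₂ X : Type} [DecidableEq V₁] [DecidableEq V₂]
  [Fintype V₁] [Fintype V₂] [Fintype X] [DecidableEq X]
variable {G₁ : SimpleGraph V₁} {G₂ : SimpleGraph V₂} {leaf₁ : X → V₁} {leaf₂ : X → V₂}
variable (hT₁ : IsPhyloTree G₁ leaf₁) (hT₂ : IsPhyloTree G₂ leaf₂)

lemma med_agree_transfer
    (hH : ∀ a b c d : X, P4 a b c d → (Displays G₁ leaf₁ a b c d ↔ Displays G₂ leaf₂ a b c d))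
    {a b c d : X} (hab : a ≠ b) (hac : a ≠ c) (hbc : b ≠ c) (had : a ≠ d) (hbd : b ≠ d) :
    (med hT₁.isTree (leaf₁ a) (leaf₁ b) (leaf₁ c) =
        med hT₁.isTree (leaf₁ a) (leaf₁ b) (leaf₁ d) ↔
      med hT₂.isTree (leaf₂ a) (leaf₂ b) (leaf₂ c) =
        med hT₂.isTree (leaf₂ a) (leaf₂ b) (leaf₂ d)) := by
  by_cases hcd : c = d
  · subst hcd; exact ⟨fun _ => rfl, fun _ => rfl⟩
  · have hP : P4 a c b d := ⟨hac, hab, had, Ne.symm hbc, hcd, hbd⟩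
    have hP' : P4 a d b c := ⟨had, hab, hac, Ne.symm hbd, Ne.symm hcd, hbc⟩
    rw [med_agree_iff hT₁, med_agree_iff hT₂, hH a c b d hP, hH a d b c hP']

lemma med_step
    (hH : ∀ a b c d : X, P4 a b c d → (Displays G₁ leaf₁ a b c d ↔ Displays G₂ leaf₂ a b c d))
    {v : V₁} (hvim : ∀ e, leaf₁ e ≠ v) {a b c c' : X}
    (h : med hT₁.isTree (leaf₁ a) (leaf₁ b) (leaf₁ c) = v)
    (h' : med hT₁.isTree (leaf₁ a) (leaf₁ b) (leaf₁ c') = v) :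
    med hT₂.isTree (leaf₂ a) (leaf₂ b) (leaf₂ c) =
      med hT₂.isTree (leaf₂ a) (leaf₂ b) (leaf₂ c') := by
  obtain ⟨hab, hac, hbc⟩ := ne_of_med_eq hT₁ hvim h
  obtain ⟨-, hac', hbc'⟩ := ne_of_med_eq hT₁ hvim h'
  by_cases hcc : c = c'
  · subst hcc; rfl
  · exact (med_agree_transfer hT₁ hT₂ hH hab hac hbc hac' hbc').1 (h.trans h'.symm)

lemma med_transfer
    (hH : ∀ a b c d : X, P4 a b c d → (Displays G₁ leaf₁ a b c d ↔ Displays G₂ leaf₂ a b c d))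
    {v : V₁} (hvim : ∀ e, leaf₁ e ≠ v) {a b c a' b' c' : X}
    (h : med hT₁.isTree (leaf₁ a) (leaf₁ b) (leaf₁ c) = v)
    (h' : med hT₁.isTree (leaf₁ a') (leaf₁ b') (leaf₁ c') = v) :
    med hT₂.isTree (leaf₂ a) (leaf₂ b) (leaf₂ c) =
      med hT₂.isTree (leaf₂ a') (leaf₂ b') (leaf₂ c') := by
  set hG := hT₁.isTree with hGdef
  -- the separation predicate
  set S : X → X → Prop := fun e f => v ∈ (tpath hG (leaf₁ e) (leaf₁ f)).support with hS
  have hsymm : ∀ {e f}, S e f → S f e := fun h => (mem_tpath_symm hG).1 h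
  have hun : ∀ e f g, S e g → S e f ∨ S f g := fun e f g hh =>
    tpath_support_union hG hh
  have hirr : ∀ e, ¬ S e e := by
    intro e he
    exact hvim e (mem_tpath_self hG he).symm
  have hne : ∀ {e f}, S e f → e ≠ f := by
    intro e f hef h
    subst h; exact hirr e hef
  have hmed : ∀ e f g, S e f → S f g → S e g → med hG (leaf₁ e) (leaf₁ f) (leaf₁ g) = v :=
    fun e f g h1 h2 h3 => (eq_med hG h1 h2 h3).symm
  have hSab : S a b := by rw [hS]; simp only []; rw [← h]; exact med_mem₁₂ hG _ _ _
  have hSbc : S b c := by rw [hS]; simp only []; rw [← h]; exact med_mem₂₃ hG _ _ _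
  have hSac : S a c := by rw [hS]; simp only []; rw [← h]; exact med_mem₁₃ hG _ _ _
  have hSab' : S a' b' := by rw [hS]; simp only []; rw [← h']; exact med_mem₁₂ hG _ _ _
  have hSbc' : S b' c' := by rw [hS]; simp only []; rw [← h']; exact med_mem₂₃ hG _ _ _
  have hSac' : S a' c' := by rw [hS]; simp only []; rw [← h']; exact med_mem₁₃ hG _ _ _
  have hpairS : ∀ p q : X, (p = a' ∨ p = b' ∨ p = c') → (q = a' ∨ q = b' ∨ q = c') →
      p ≠ q → S p q := by
    intro p q hp hq hpq
    rcases hp with rfl | rfl | rfl <;> rcases hq with rfl | rfl | rfl <;>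
      first
        | exact absurd rfl hpq
        | assumption
        | exact hsymm (by assumption)
  -- pick w in the second triple separated from neither a nor b
  have hw : ∃ w, (w = a' ∨ w = b' ∨ w = c') ∧ S w a ∧ S w b := by
    by_cases h1 : S a' a
    · by_cases h2 : S a' b
      · exact ⟨a', Or.inl rfl, h1, h2⟩
      · have hb'b : S b' b := by
          rcases hun a' b b' hSab' with hh | hh
          · exact absurd hh h2
          · exact hsymm hh
        by_cases h3 : S b' a
        · exact ⟨b', Or.inr (Or.inl rfl), h3, hb'b⟩
        · have hc'a : S c' a := by
            rcases hun b' a c' hSbc' with hh | hh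
            · exact absurd hh h3
            · exact hsymm hh
          have hc'b : S c' b := by
            rcases hun a' b c' hSac' with hh | hh
            · exact absurd hh h2
            · exact hsymm hh
          exact ⟨c', Or.inr (Or.inr rfl), hc'a, hc'b⟩
    · have hb'a : S b' a := by
        rcases hun a' a b' hSab' with hh | hh
        · exact absurd hh h1
        · exact hsymm hh
      have hc'a : S c' a := by
        rcases hun a' a c' hSac' with hh | hh
        · exact absurd hh h1
        · exact hsymm hh
      by_cases h2 : S b' b
      · exact ⟨b', Or.inr (Or.inl rfl), hb'a, h2⟩
      · have hc'b : S c' b := by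
          rcases hun b' b c' hSbc' with hh | hh
          · exact absurd hh h2
          · exact hsymm hh
        exact ⟨c', Or.inr (Or.inr rfl), hc'a, hc'b⟩
  obtain ⟨w, hwmem, hwa, hwb⟩ := hw
  -- pick w' in the second triple, distinct from w, separated from neither a
  have hw' : ∃ w', (w' = a' ∨ w' = b' ∨ w' = c') ∧ w' ≠ w ∧ S w' a := by
    have haux : ∀ p q : X, (p = a' ∨ p = b' ∨ p = c') → (q = a' ∨ q = b' ∨ q = c') →
        p ≠ q → ¬ S p a → S q a := by
      intro p q hp hq hpq hpa
      rcases hun p a q (hpairS p q hp hq hpq) with hh | hh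
      · exact absurd hh hpa
      · exact hsymm hh
    obtain ⟨hab', hac', hbc'⟩ := ne_of_med_eq hT₁ hvim h'
    rcases hwmem with rfl | rfl | rfl
    · by_cases hh : S b' a
      · exact ⟨b', Or.inr (Or.inl rfl), Ne.symm hab', hh⟩
      · exact ⟨c', Or.inr (Or.inr rfl), Ne.symm hac',
          haux b' c' (Or.inr (Or.inl rfl)) (Or.inr (Or.inr rfl)) hbc' hh⟩
    · by_cases hh : S a' a
      · exact ⟨a', Or.inl rfl, hab', hh⟩
      · exact ⟨c', Or.inr (Or.inr rfl), Ne.symm hbc',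
          haux a' c' (Or.inl rfl) (Or.inr (Or.inr rfl)) hac' hh⟩
    · by_cases hh : S a' a
      · exact ⟨a', Or.inl rfl, hac', hh⟩
      · exact ⟨b', Or.inr (Or.inl rfl), hbc',
          haux a' b' (Or.inl rfl) (Or.inr (Or.inl rfl)) hab' hh⟩
  obtain ⟨w', hw'mem, hw'w, hw'a⟩ := hw'
  -- the third element
  have hw'' : ∃ w'', (w'' = a' ∨ w'' = b' ∨ w'' = c') ∧ w'' ≠ w ∧ w'' ≠ w' := by
    obtain ⟨hab', hac', hbc'⟩ := ne_of_med_eq hT₁ hvim h'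
    rcases hwmem with rfl | rfl | rfl <;> rcases hw'mem with rfl | rfl | rfl
    · exact absurd rfl hw'w
    · exact ⟨c', Or.inr (Or.inr rfl), Ne.symm hac', Ne.symm hbc'⟩
    · exact ⟨b', Or.inr (Or.inl rfl), Ne.symm hab', hbc'⟩
    · exact ⟨c', Or.inr (Or.inr rfl), Ne.symm hbc', Ne.symm hac'⟩
    · exact absurd rfl hw'w
    · exact ⟨a', Or.inl rfl, hab', hac'⟩
    · exact ⟨b', Or.inr (Or.inl rfl), hbc', Ne.symm hab'⟩
    · exact ⟨a', Or.inl rfl, hac', hab'⟩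
    · exact absurd rfl hw'w
  obtain ⟨w'', hw''mem, hw''w, hw''w'⟩ := hw''
  have hSww' : S w w' := hsymm (hpairS w' w hw'mem hwmem hw'w)
  have hSw''w : S w'' w := hpairS w'' w hw''mem hwmem hw''w
  have hSw''w' : S w'' w' := hpairS w'' w' hw''mem hw'mem hw''w'
  -- chain of median equalities
  have m1 : med hG (leaf₁ a) (leaf₁ b) (leaf₁ w) = v :=
    hmed a b w hSab (hsymm hwb) (hsymm hwa)
  have m2 : med hG (leaf₁ a) (leaf₁ w) (leaf₁ b) = v :=
    hmed a w b (hsymm hwa) hwb hSab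
  have m3 : med hG (leaf₁ a) (leaf₁ w) (leaf₁ w') = v :=
    hmed a w w' (hsymm hwa) hSww' (hsymm hw'a)
  have m4 : med hG (leaf₁ w) (leaf₁ w') (leaf₁ a) = v :=
    hmed w w' a hSww' hw'a hwa
  have m5 : med hG (leaf₁ w) (leaf₁ w') (leaf₁ w'') = v :=
    hmed w w' w'' hSww' (hsymm hSw''w') (hsymm hSw''w)
  have E1 := med_step hT₁ hT₂ hH hvim h m1
  have E2 := med_step hT₁ hT₂ hH hvim m2 m3
  have E3 := med_step hT₁ hT₂ hH hvim m4 m5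
  -- identify med₂ w w' w'' with med₂ a' b' c'
  have hfin : med hT₂.isTree (leaf₂ a') (leaf₂ b') (leaf₂ c') =
      med hT₂.isTree (leaf₂ w) (leaf₂ w') (leaf₂ w'') := by
    have hinj := hT₂.leaf_inj
    have hmap : ∀ p : X, (p = a' ∨ p = b' ∨ p = c') →
        (leaf₂ p = leaf₂ a' ∨ leaf₂ p = leaf₂ b' ∨ leaf₂ p = leaf₂ c') := by
      intro p hp
      rcases hp with rfl | rfl | rfl
      · exact Or.inl rfl
      · exact Or.inr (Or.inl rfl)
      · exact Or.inr (Or.inr rfl)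
    have hne2 : ∀ p q : X, p ≠ q → leaf₂ p ≠ leaf₂ q := fun p q hpq hh => hpq (hinj hh)
    refine eq_med hT₂.isTree ?_ ?_ ?_
    · exact med_on_pair hT₂.isTree (hmap w hwmem) (hmap w' hw'mem) (hne2 _ _ (Ne.symm hw'w))
    · exact med_on_pair hT₂.isTree (hmap w' hw'mem) (hmap w'' hw''mem) (hne2 _ _ (Ne.symm hw''w'))
    · exact med_on_pair hT₂.isTree (hmap w hwmem) (hmap w'' hw''mem) (hne2 _ _ (Ne.symm hw''w))
  calc med hT₂.isTree (leaf₂ a) (leaf₂ b) (leaf₂ c)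
      = med hT₂.isTree (leaf₂ a) (leaf₂ b) (leaf₂ w) := E1
    _ = med hT₂.isTree (leaf₂ a) (leaf₂ w) (leaf₂ b) := med_swap₂₃ hT₂.isTree _ _ _
    _ = med hT₂.isTree (leaf₂ a) (leaf₂ w) (leaf₂ w') := E2
    _ = med hT₂.isTree (leaf₂ w) (leaf₂ a) (leaf₂ w') := med_swap₁₂ hT₂.isTree _ _ _
    _ = med hT₂.isTree (leaf₂ w) (leaf₂ w') (leaf₂ a) := med_swap₂₃ hT₂.isTree _ _ _
    _ = med hT₂.isTree (leaf₂ w) (leaf₂ w') (leaf₂ w'') := E3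
    _ = med hT₂.isTree (leaf₂ a') (leaf₂ b') (leaf₂ c') := hfin.symm

lemma phi_exists
    (hH : ∀ a b c d : X, P4 a b c d → (Displays G₁ leaf₁ a b c d ↔ Displays G₂ leaf₂ a b c d))
    (hX : 3 ≤ Fintype.card X) (v : V₁) : ∃ w : V₂,
    (∀ x : X, leaf₁ x = v → w = leaf₂ x) ∧
    (∀ a b c : X, a ≠ b → a ≠ c → b ≠ c →
      v = med hT₁.isTree (leaf₁ a) (leaf₁ b) (leaf₁ c) →
      w = med hT₂.isTree (leaf₂ a) (leaf₂ b) (leaf₂ c)) := by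
  by_cases hleaf : ∃ x, leaf₁ x = v
  · obtain ⟨x₀, hx₀⟩ := hleaf
    refine ⟨leaf₂ x₀, ?_, ?_⟩
    · intro x hx
      rw [hT₁.leaf_inj (hx.trans hx₀.symm)]
    · intro a b c hab hac hbc hmed
      exact absurd (hx₀.trans hmed) (med_not_leaf hT₁ hab hac hbc x₀)
  · push_neg at hleaf
    obtain ⟨a₀, b₀, c₀, h1, h2, h3, hv⟩ := internal_is_med hT₁ hX hleaf
    refine ⟨med hT₂.isTree (leaf₂ a₀) (leaf₂ b₀) (leaf₂ c₀), ?_, ?_⟩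
    · intro x hx
      exact absurd hx (hleaf x)
    · intro a b c hab hac hbc hmed
      exact (med_transfer hT₁ hT₂ hH hleaf hmed.symm hv.symm).symm

noncomputable def phi
    (hH : ∀ a b c d : X, P4 a b c d → (Displays G₁ leaf₁ a b c d ↔ Displays G₂ leaf₂ a b c d))
    (hX : 3 ≤ Fintype.card X) : V₁ → V₂ :=
  fun v => (phi_exists hT₁ hT₂ hH hX v).choose

lemma phi_leaf
    (hH : ∀ a b c d : X, P4 a b c d → (Displays G₁ leaf₁ a b c d ↔ Displays G₂ leaf₂ a b c d))
    (hX : 3 ≤ Fintype.card X) (x : X) : phi hT₁ hT₂ hH hX (leaf₁ x) = leaf₂ x :=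
  (phi_exists hT₁ hT₂ hH hX (leaf₁ x)).choose_spec.1 x rfl

lemma phi_med
    (hH : ∀ a b c d : X, P4 a b c d → (Displays G₁ leaf₁ a b c d ↔ Displays G₂ leaf₂ a b c d))
    (hX : 3 ≤ Fintype.card X) {a b c : X} (hab : a ≠ b) (hac : a ≠ c) (hbc : b ≠ c) :
    phi hT₁ hT₂ hH hX (med hT₁.isTree (leaf₁ a) (leaf₁ b) (leaf₁ c)) =
      med hT₂.isTree (leaf₂ a) (leaf₂ b) (leaf₂ c) :=
  (phi_exists hT₁ hT₂ hH hX _).choose_spec.2 a b c hab hac hbc rfl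

lemma phi_left_inverse
    (hH : ∀ a b c d : X, P4 a b c d → (Displays G₁ leaf₁ a b c d ↔ Displays G₂ leaf₂ a b c d))
    (hX : 3 ≤ Fintype.card X) (v : V₁) :
    phi hT₂ hT₁ (fun a b c d h => (hH a b c d h).symm) hX (phi hT₁ hT₂ hH hX v) = v := by
  by_cases hleaf : ∃ x, leaf₁ x = v
  · obtain ⟨x, hx⟩ := hleaf
    rw [← hx, phi_leaf hT₁ hT₂ hH hX, phi_leaf hT₂ hT₁]
  · push_neg at hleaf
    obtain ⟨a₀, b₀, c₀, h1, h2, h3, hv⟩ := internal_is_med hT₁ hX hleaf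
    rw [hv, phi_med hT₁ hT₂ hH hX h1 h2 h3, phi_med hT₂ hT₁ _ hX h1 h2 h3]

lemma lessF_transfer
    (hH : ∀ a b c d : X, P4 a b c d → (Displays G₁ leaf₁ a b c d ↔ Displays G₂ leaf₂ a b c d))
    {a p s t : X} (hap : a ≠ p) (has : a ≠ s) (hps : p ≠ s) (hat : a ≠ t) (hpt : p ≠ t)
    (hst : s ≠ t) :
    ((med hT₁.isTree (leaf₁ a) (leaf₁ s) (leaf₁ t) =
        med hT₁.isTree (leaf₁ a) (leaf₁ p) (leaf₁ s) ∧
      med hT₁.isTree (leaf₁ a) (leaf₁ p) (leaf₁ s) ≠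
        med hT₁.isTree (leaf₁ a) (leaf₁ p) (leaf₁ t)) ↔
    (med hT₂.isTree (leaf₂ a) (leaf₂ s) (leaf₂ t) =
        med hT₂.isTree (leaf₂ a) (leaf₂ p) (leaf₂ s) ∧
      med hT₂.isTree (leaf₂ a) (leaf₂ p) (leaf₂ s) ≠
        med hT₂.isTree (leaf₂ a) (leaf₂ p) (leaf₂ t))) := by
  have hpart1 : med hT₁.isTree (leaf₁ a) (leaf₁ s) (leaf₁ t) =
      med hT₁.isTree (leaf₁ a) (leaf₁ p) (leaf₁ s) ↔
      med hT₂.isTree (leaf₂ a) (leaf₂ s) (leaf₂ t) =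
      med hT₂.isTree (leaf₂ a) (leaf₂ p) (leaf₂ s) := by
    rw [show med hT₁.isTree (leaf₁ a) (leaf₁ p) (leaf₁ s) =
        med hT₁.isTree (leaf₁ a) (leaf₁ s) (leaf₁ p) from med_swap₂₃ _ _ _ _]
    rw [show med hT₂.isTree (leaf₂ a) (leaf₂ p) (leaf₂ s) =
        med hT₂.isTree (leaf₂ a) (leaf₂ s) (leaf₂ p) from med_swap₂₃ _ _ _ _]
    exact med_agree_transfer hT₁ hT₂ hH has hat hst hap (Ne.symm hps)
  have hpart2 : med hT₁.isTree (leaf₁ a) (leaf₁ p) (leaf₁ s) =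
      med hT₁.isTree (leaf₁ a) (leaf₁ p) (leaf₁ t) ↔
      med hT₂.isTree (leaf₂ a) (leaf₂ p) (leaf₂ s) =
      med hT₂.isTree (leaf₂ a) (leaf₂ p) (leaf₂ t) :=
    med_agree_transfer hT₁ hT₂ hH hap has hps hat hpt
  exact and_congr hpart1 (not_congr hpart2)

lemma phi_adj_leaf
    (hH : ∀ a b c d : X, P4 a b c d → (Displays G₁ leaf₁ a b c d ↔ Displays G₂ leaf₂ a b c d))
    (hX : 3 ≤ Fintype.card X) {x : X} {v : V₁} (hvim : ∀ e, leaf₁ e ≠ v)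
    (hadj : G₁.Adj (leaf₁ x) v) : G₂.Adj (leaf₂ x) (phi hT₁ hT₂ hH hX v) := by
  have hG1 := hT₁.isTree
  have hG2 := hT₂.isTree
  have hdegv := deg_ge_three hT₁ hX hvim
  obtain ⟨np, hnp, hnpu, -⟩ := exists_third_nbr hdegv (leaf₁ x) (leaf₁ x)
  obtain ⟨nq, hnq, hnqp, hnqu⟩ := exists_third_nbr hdegv np (leaf₁ x)
  obtain ⟨wp, hwpdeg, hvwp, hsndp⟩ := exists_leaf_beyond hT₁.isTree hnp
  obtain ⟨wq, hwqdeg, hvwq, hsndq⟩ := exists_leaf_beyond hT₁.isTree hnq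
  obtain ⟨p, hp⟩ := (hT₁.leaf_iff wp).2 hwpdeg
  obtain ⟨q, hq⟩ := (hT₁.leaf_iff wq).2 hwqdeg
  have hsx : tsnd hT₁.isTree v (leaf₁ x) = leaf₁ x := tsnd_eq_of_adj hT₁.isTree hadj.symm
  have hsp : tsnd hT₁.isTree v (leaf₁ p) = np := by rw [hp]; exact hsndp
  have hsq : tsnd hT₁.isTree v (leaf₁ q) = nq := by rw [hq]; exact hsndq
  have hvx : v ≠ leaf₁ x := hadj.ne'
  have hvp : v ≠ leaf₁ p := by rw [hp]; exact hvwp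
  have hvq : v ≠ leaf₁ q := by rw [hq]; exact hvwq
  have hm1 := (branch_disjoint hT₁.isTree hvx hvp
    (by rw [hsx, hsp]; exact Ne.symm hnpu)).2
  have hm2 := (branch_disjoint hT₁.isTree hvx hvq
    (by rw [hsx, hsq]; exact Ne.symm hnqu)).2
  have hm3 := (branch_disjoint hT₁.isTree hvp hvq
    (by rw [hsp, hsq]; exact Ne.symm hnqp)).2
  have hv : v = med hT₁.isTree (leaf₁ x) (leaf₁ p) (leaf₁ q) := eq_med hT₁.isTree hm1 hm3 hm2
  obtain ⟨hxp, hxq, hpq⟩ := ne_of_med_eq hT₁ hvim hv.symm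
  -- claim in the first tree
  have claim1 : ∀ e : X, e ≠ x →
      ¬ (med hT₁.isTree (leaf₁ x) (leaf₁ e) (leaf₁ q) =
          med hT₁.isTree (leaf₁ x) (leaf₁ p) (leaf₁ e) ∧
         med hT₁.isTree (leaf₁ x) (leaf₁ p) (leaf₁ e) ≠
          med hT₁.isTree (leaf₁ x) (leaf₁ p) (leaf₁ q)) := by
    rintro e hex ⟨f1, f2⟩
    have hgeo := less_formula_to_geo hT₁.isTree f1 f2
    rw [← hv, support_tpath_of_adj hT₁.isTree hadj] at hgeo
    simp only [List.mem_cons, List.not_mem_nil, or_false, List.mem_singleton] at hgeo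
    rcases hgeo with hgeo | hgeo
    · by_cases hep : e = p
      · subst hep
        have hlp : med hT₁.isTree (leaf₁ x) (leaf₁ e) (leaf₁ e) = leaf₁ e :=
          mem_tpath_self hT₁.isTree (med_mem₂₃ hT₁.isTree _ _ _)
        rw [hlp] at hgeo
        exact hex (hT₁.leaf_inj hgeo)
      · exact med_not_leaf hT₁ hxp (Ne.symm hex) (Ne.symm hep) x hgeo.symm
    · rw [← hv] at f2
      exact f2 hgeo
  -- claim in the second tree
  have claim2 : ∀ e : X, e ≠ x →
      ¬ (med hT₂.isTree (leaf₂ x) (leaf₂ e) (leaf₂ q) =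
          med hT₂.isTree (leaf₂ x) (leaf₂ p) (leaf₂ e) ∧
         med hT₂.isTree (leaf₂ x) (leaf₂ p) (leaf₂ e) ≠
          med hT₂.isTree (leaf₂ x) (leaf₂ p) (leaf₂ q)) := by
    intro e hex
    by_cases hep : e = p
    · subst hep
      rintro ⟨f1, -⟩
      have hlp : med hT₂.isTree (leaf₂ x) (leaf₂ e) (leaf₂ e) = leaf₂ e :=
        mem_tpath_self hT₂.isTree (med_mem₂₃ hT₂.isTree _ _ _)
      rw [hlp] at f1
      exact med_not_leaf hT₂ hxp hxq hpq e f1.symm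
    · by_cases heq : e = q
      · subst heq
        rintro ⟨-, f2⟩
        exact f2 rfl
      · intro h2
        exact claim1 e hex
          ((lessF_transfer hT₁ hT₂ hH hxp (Ne.symm hex) (Ne.symm hep) hxq hpq heq).2 h2)
  -- pass to the second tree
  have hphiv : phi hT₁ hT₂ hH hX v =
      med hT₂.isTree (leaf₂ x) (leaf₂ p) (leaf₂ q) := by
    rw [hv]; exact phi_med hT₁ hT₂ hH hX hxp hxq hpq
  rw [hphiv]
  by_contra hnadj
  have hxv2 : leaf₂ x ≠ med hT₂.isTree (leaf₂ x) (leaf₂ p) (leaf₂ q) :=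
    med_not_leaf hT₂ hxp hxq hpq x
  have hv2p : med hT₂.isTree (leaf₂ x) (leaf₂ p) (leaf₂ q) ≠ leaf₂ p :=
    Ne.symm (med_not_leaf hT₂ hxp hxq hpq p)
  obtain ⟨w, n3, hwline, hwx, hwp, hwu, hwv, huxw, hwxv, hn3adj, hn3x, hn3p⟩ :=
    gap_lemma hT₂.isTree
      (fun w hw h1 h2 => interior_deg_ge_three hT₂ hX hw h1 h2)
      (Walk.start_mem_support _) (med_mem₁₂ hT₂.isTree _ _ _) hxv2 hv2p hnadj
  obtain ⟨l, hldeg, hwl, hsndl⟩ := exists_leaf_beyond hT₂.isTree hn3adj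
  obtain ⟨e, he⟩ := (hT₂.leaf_iff l).2 hldeg
  have hwmed : w = med hT₂.isTree (leaf₂ x) (leaf₂ p) (leaf₂ e) :=
    med_of_third_branch hT₂.isTree hwline hwx hwp hn3x hn3p
      (by rw [he]; exact hsndl) (by rw [he]; exact hwl)
  have hex : e ≠ x := by
    rintro rfl
    have := med_mem₁₃ hT₂.isTree (leaf₂ e) (leaf₂ p) (leaf₂ e)
    rw [← hwmed] at this
    exact hwx (mem_tpath_self hT₂.isTree this)
  refine claim2 e hex ⟨?_, ?_⟩
  · refine less_geo_to_formula hT₂.isTree ?_ ?_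
    · rw [← hwmed]; exact hwxv
    · rw [← hwmed]; exact hwv
  · rw [← hwmed]; exact hwv

lemma phi_adj_internal
    (hH : ∀ a b c d : X, P4 a b c d → (Displays G₁ leaf₁ a b c d ↔ Displays G₂ leaf₂ a b c d))
    (hX : 3 ≤ Fintype.card X) {u v : V₁}
    (huim : ∀ e, leaf₁ e ≠ u) (hvim : ∀ e, leaf₁ e ≠ v)
    (hadj : G₁.Adj u v) : G₂.Adj (phi hT₁ hT₂ hH hX u) (phi hT₁ hT₂ hH hX v) := by
  have hdegu := deg_ge_three hT₁ hX huim
  have hdegv := deg_ge_three hT₁ hX hvim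
  have huv : u ≠ v := hadj.ne
  obtain ⟨na, hna, hnav, -⟩ := exists_third_nbr hdegu v v
  obtain ⟨nb, hnb, hnba, hnbv⟩ := exists_third_nbr hdegu na v
  obtain ⟨np, hnp, hnpu, -⟩ := exists_third_nbr hdegv u u
  obtain ⟨nq, hnq, hnqp, hnqu⟩ := exists_third_nbr hdegv np u
  obtain ⟨wa, hwadeg, huwa, hsnda⟩ := exists_leaf_beyond hT₁.isTree hna
  obtain ⟨wb, hwbdeg, huwb, hsndb⟩ := exists_leaf_beyond hT₁.isTree hnb
  obtain ⟨wp, hwpdeg, hvwp, hsndp⟩ := exists_leaf_beyond hT₁.isTree hnp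
  obtain ⟨wq, hwqdeg, hvwq, hsndq⟩ := exists_leaf_beyond hT₁.isTree hnq
  obtain ⟨a, ha⟩ := (hT₁.leaf_iff wa).2 hwadeg
  obtain ⟨b, hb⟩ := (hT₁.leaf_iff wb).2 hwbdeg
  obtain ⟨p, hp⟩ := (hT₁.leaf_iff wp).2 hwpdeg
  obtain ⟨q, hq⟩ := (hT₁.leaf_iff wq).2 hwqdeg
  have hsa : tsnd hT₁.isTree u (leaf₁ a) = na := by rw [ha]; exact hsnda
  have hsb : tsnd hT₁.isTree u (leaf₁ b) = nb := by rw [hb]; exact hsndb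
  have hsp : tsnd hT₁.isTree v (leaf₁ p) = np := by rw [hp]; exact hsndp
  have hsq : tsnd hT₁.isTree v (leaf₁ q) = nq := by rw [hq]; exact hsndq
  have hua : u ≠ leaf₁ a := by rw [ha]; exact huwa
  have hub : u ≠ leaf₁ b := by rw [hb]; exact huwb
  have hvp : v ≠ leaf₁ p := by rw [hp]; exact hvwp
  have hvq : v ≠ leaf₁ q := by rw [hq]; exact hvwq
  have hup : u ≠ leaf₁ p := Ne.symm (huim p)
  have huq : u ≠ leaf₁ q := Ne.symm (huim q)
  have hva : v ≠ leaf₁ a := Ne.symm (hvim a)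
  have hvb : v ≠ leaf₁ b := Ne.symm (hvim b)
  -- second vertices across the edge
  have hsup : tsnd hT₁.isTree u (leaf₁ p) = v := by
    refine tsnd_cons hT₁.isTree hadj ?_
    intro hmem
    have h5 := tsnd_prefix hT₁.isTree hmem huv
    rw [hsp, tsnd_eq_of_adj hT₁.isTree hadj.symm] at h5
    exact hnpu h5
  have hsuq : tsnd hT₁.isTree u (leaf₁ q) = v := by
    refine tsnd_cons hT₁.isTree hadj ?_
    intro hmem
    have h5 := tsnd_prefix hT₁.isTree hmem huv
    rw [hsq, tsnd_eq_of_adj hT₁.isTree hadj.symm] at h5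
    exact hnqu h5
  have hsva : tsnd hT₁.isTree v (leaf₁ a) = u := by
    refine tsnd_cons hT₁.isTree hadj.symm ?_
    intro hmem
    have h5 := tsnd_prefix hT₁.isTree hmem huv.symm
    rw [hsa, tsnd_eq_of_adj hT₁.isTree hadj] at h5
    exact hnav h5
  have hsvb : tsnd hT₁.isTree v (leaf₁ b) = u := by
    refine tsnd_cons hT₁.isTree hadj.symm ?_
    intro hmem
    have h5 := tsnd_prefix hT₁.isTree hmem huv.symm
    rw [hsb, tsnd_eq_of_adj hT₁.isTree hadj] at h5
    exact hnbv h5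
  -- median identifications
  have hm_ab := (branch_disjoint hT₁.isTree hua hub (by rw [hsa, hsb]; exact Ne.symm hnba)).2
  have hm_ap := (branch_disjoint hT₁.isTree hua hup (by rw [hsa, hsup]; exact hnav)).2
  have hm_bp := (branch_disjoint hT₁.isTree hub hup (by rw [hsb, hsup]; exact hnbv)).2
  have hu_abp : u = med hT₁.isTree (leaf₁ a) (leaf₁ b) (leaf₁ p) :=
    eq_med hT₁.isTree hm_ab hm_bp hm_ap
  have hm_vap := (branch_disjoint hT₁.isTree hva hvp (by rw [hsva, hsp]; exact Ne.symm hnpu)).2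
  have hm_vaq := (branch_disjoint hT₁.isTree hva hvq (by rw [hsva, hsq]; exact Ne.symm hnqu)).2
  have hm_vpq := (branch_disjoint hT₁.isTree hvp hvq (by rw [hsp, hsq]; exact Ne.symm hnqp)).2
  have hv_apq : v = med hT₁.isTree (leaf₁ a) (leaf₁ p) (leaf₁ q) :=
    eq_med hT₁.isTree hm_vap hm_vpq hm_vaq
  obtain ⟨hXab, hXap, hXbp⟩ := ne_of_med_eq hT₁ huim hu_abp.symm
  obtain ⟨-, hXaq, hXpq⟩ := ne_of_med_eq hT₁ hvim hv_apq.symm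
  have hXbq : b ≠ q := by
    rintro rfl
    rw [hsvb] at hsq
    exact hnqu hsq.symm
  -- u written on the (a,p)-line
  have heqU : med hT₁.isTree (leaf₁ a) (leaf₁ p) (leaf₁ b) = u :=
    (med_swap₂₃ hT₁.isTree (leaf₁ a) (leaf₁ b) (leaf₁ p)).symm.trans hu_abp.symm
  have heqV : med hT₁.isTree (leaf₁ a) (leaf₁ p) (leaf₁ q) = v := hv_apq.symm
  -- order: u between leaf a and v
  have hu_in : u ∈ (tpath hT₁.isTree (leaf₁ a) v).support := by
    have hA : ((tpath hT₁.isTree (leaf₁ a) u).append (Walk.cons hadj Walk.nil)).IsPath := by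
      refine isPath_append (tpath_isPath _ _ _) ?_ ?_
      · rw [Walk.isPath_def]; simp [hadj.ne]
      · intro c hc1 hc2
        simp only [Walk.support_cons, Walk.support_nil, List.mem_cons,
          List.not_mem_nil, or_false] at hc2
        rcases hc2 with rfl | rfl
        · rfl
        · exfalso
          have h5 := tsnd_prefix hT₁.isTree ((mem_tpath_symm hT₁.isTree).1 hc1) huv.symm
          rw [hsa, tsnd_eq_of_adj hT₁.isTree hadj] at h5
          exact hnav h5
    rw [← tpath_unique hT₁.isTree _ hA, Walk.mem_support_append_iff]
    exact Or.inl (Walk.end_mem_support _)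
  -- no median strictly between u and v, in the first tree
  have claim1 : ∀ e : X,
      ¬ ((med hT₁.isTree (leaf₁ a) (leaf₁ b) (leaf₁ e) =
            med hT₁.isTree (leaf₁ a) (leaf₁ p) (leaf₁ b) ∧
          med hT₁.isTree (leaf₁ a) (leaf₁ p) (leaf₁ b) ≠
            med hT₁.isTree (leaf₁ a) (leaf₁ p) (leaf₁ e)) ∧
         (med hT₁.isTree (leaf₁ a) (leaf₁ e) (leaf₁ q) =
            med hT₁.isTree (leaf₁ a) (leaf₁ p) (leaf₁ e) ∧
          med hT₁.isTree (leaf₁ a) (leaf₁ p) (leaf₁ e) ≠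
            med hT₁.isTree (leaf₁ a) (leaf₁ p) (leaf₁ q))) := by
    rintro e ⟨⟨f1, f2⟩, ⟨g1, g2⟩⟩
    have geo1 := less_formula_to_geo hT₁.isTree f1 f2
    have geo2 := less_formula_to_geo hT₁.isTree g1 g2
    rw [heqU] at geo1 f2
    rw [heqV] at geo2 g2
    have hbet := between_mem hT₁.isTree hu_in geo1 geo2 (Ne.symm f2)
    rw [support_tpath_of_adj hT₁.isTree hadj] at hbet
    simp only [List.mem_cons, List.not_mem_nil, or_false, List.mem_singleton] at hbet
    rcases hbet with hh | hh
    · exact f2 hh.symm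
    · exact g2 hh
  -- the same in the second tree
  have claim2 : ∀ e : X,
      ¬ ((med hT₂.isTree (leaf₂ a) (leaf₂ b) (leaf₂ e) =
            med hT₂.isTree (leaf₂ a) (leaf₂ p) (leaf₂ b) ∧
          med hT₂.isTree (leaf₂ a) (leaf₂ p) (leaf₂ b) ≠
            med hT₂.isTree (leaf₂ a) (leaf₂ p) (leaf₂ e)) ∧
         (med hT₂.isTree (leaf₂ a) (leaf₂ e) (leaf₂ q) =
            med hT₂.isTree (leaf₂ a) (leaf₂ p) (leaf₂ e) ∧
          med hT₂.isTree (leaf₂ a) (leaf₂ p) (leaf₂ e) ≠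
            med hT₂.isTree (leaf₂ a) (leaf₂ p) (leaf₂ q))) := by
    intro e
    by_cases heb : e = b
    · subst heb
      rintro ⟨⟨-, f2⟩, -⟩
      exact f2 rfl
    by_cases heq' : e = q
    · subst heq'
      rintro ⟨-, ⟨-, g2⟩⟩
      exact g2 rfl
    by_cases hea : e = a
    · subst hea
      rintro ⟨⟨f1, -⟩, -⟩
      have hlf : med hT₂.isTree (leaf₂ e) (leaf₂ b) (leaf₂ e) = leaf₂ e :=
        mem_tpath_self hT₂.isTree (med_mem₁₃ hT₂.isTree _ _ _)
      rw [hlf] at f1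
      exact med_not_leaf hT₂ hXap hXab (Ne.symm hXbp) e f1
    by_cases hep : e = p
    · subst hep
      rintro ⟨-, ⟨g1, -⟩⟩
      have hlf : med hT₂.isTree (leaf₂ a) (leaf₂ e) (leaf₂ e) = leaf₂ e :=
        mem_tpath_self hT₂.isTree (med_mem₂₃ hT₂.isTree _ _ _)
      rw [hlf] at g1
      exact med_not_leaf hT₂ hXap hXaq hXpq e g1.symm
    · rintro ⟨h1, h2⟩
      refine claim1 e ⟨?_, ?_⟩
      · exact (lessF_transfer hT₁ hT₂ hH hXap hXab (Ne.symm hXbp) (Ne.symm hea) (Ne.symm hep)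
          (fun hh => heb hh.symm)).2 h1
      · exact (lessF_transfer hT₁ hT₂ hH hXap (Ne.symm hea) (Ne.symm hep) hXaq hXpq
          heq').2 h2
  -- first tree order fact transferred
  have hF1bq : med hT₁.isTree (leaf₁ a) (leaf₁ b) (leaf₁ q) =
      med hT₁.isTree (leaf₁ a) (leaf₁ p) (leaf₁ b) ∧
      med hT₁.isTree (leaf₁ a) (leaf₁ p) (leaf₁ b) ≠
      med hT₁.isTree (leaf₁ a) (leaf₁ p) (leaf₁ q) := by
    constructor
    · refine less_geo_to_formula hT₁.isTree ?_ ?_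
      · rw [heqU, heqV]; exact hu_in
      · rw [heqU, heqV]; exact huv
    · rw [heqU, heqV]; exact huv
  have hF2bq := (lessF_transfer hT₁ hT₂ hH hXap hXab (Ne.symm hXbp) hXaq hXpq hXbq).1 hF1bq
  have hgeo2 := less_formula_to_geo hT₂.isTree hF2bq.1 hF2bq.2
  -- pass to the second tree
  have hphiu : phi hT₁ hT₂ hH hX u = med hT₂.isTree (leaf₂ a) (leaf₂ p) (leaf₂ b) := by
    rw [hu_abp, phi_med hT₁ hT₂ hH hX hXab hXap hXbp]
    exact med_swap₂₃ hT₂.isTree _ _ _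
  have hphiv : phi hT₁ hT₂ hH hX v = med hT₂.isTree (leaf₂ a) (leaf₂ p) (leaf₂ q) := by
    rw [hv_apq, phi_med hT₁ hT₂ hH hX hXap hXaq hXpq]
  rw [hphiu, hphiv]
  by_contra hnadj
  have hv2p : med hT₂.isTree (leaf₂ a) (leaf₂ p) (leaf₂ q) ≠ leaf₂ p :=
    Ne.symm (med_not_leaf hT₂ hXap hXaq hXpq p)
  obtain ⟨w, n3, hwline, hwx, hwp, hwu, hwv, huxw, hwxv, hn3adj, hn3x, hn3p⟩ :=
    gap_lemma hT₂.isTree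
      (fun w hw h1 h2 => interior_deg_ge_three hT₂ hX hw h1 h2)
      hgeo2 (med_mem₁₂ hT₂.isTree _ _ _) hF2bq.2 hv2p hnadj
  obtain ⟨l, hldeg, hwl, hsndl⟩ := exists_leaf_beyond hT₂.isTree hn3adj
  obtain ⟨e, he⟩ := (hT₂.leaf_iff l).2 hldeg
  have hwmed : w = med hT₂.isTree (leaf₂ a) (leaf₂ p) (leaf₂ e) :=
    med_of_third_branch hT₂.isTree hwline hwx hwp hn3x hn3p
      (by rw [he]; exact hsndl) (by rw [he]; exact hwl)
  refine claim2 e ⟨⟨?_, ?_⟩, ⟨?_, ?_⟩⟩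
  · refine less_geo_to_formula hT₂.isTree ?_ ?_
    · rw [← hwmed]; exact huxw
    · rw [← hwmed]; exact Ne.symm hwu
  · rw [← hwmed]; exact Ne.symm hwu
  · refine less_geo_to_formula hT₂.isTree ?_ ?_
    · rw [← hwmed]; exact hwxv
    · rw [← hwmed]; exact hwv
  · rw [← hwmed]; exact hwv

lemma phi_adj
    (hH : ∀ a b c d : X, P4 a b c d → (Displays G₁ leaf₁ a b c d ↔ Displays G₂ leaf₂ a b c d))
    (hX : 3 ≤ Fintype.card X) {u v : V₁} (hadj : G₁.Adj u v) :
    G₂.Adj (phi hT₁ hT₂ hH hX u) (phi hT₁ hT₂ hH hX v) := by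
  by_cases hu : ∃ x, leaf₁ x = u <;> by_cases hv : ∃ x, leaf₁ x = v
  · obtain ⟨x, hx⟩ := hu
    obtain ⟨y, hy⟩ := hv
    rw [← hx, ← hy] at hadj
    exact absurd hadj (no_adjacent_leaves hT₁ hX x y)
  · push_neg at hv
    obtain ⟨x, hx⟩ := hu
    rw [← hx, phi_leaf hT₁ hT₂ hH hX]
    rw [← hx] at hadj
    exact phi_adj_leaf hT₁ hT₂ hH hX hv hadj
  · push_neg at hu
    obtain ⟨y, hy⟩ := hv
    rw [← hy, phi_leaf hT₁ hT₂ hH hX]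
    rw [← hy] at hadj
    exact (phi_adj_leaf hT₁ hT₂ hH hX hu hadj.symm).symm
  · push_neg at hu
    push_neg at hv
    exact phi_adj_internal hT₁ hT₂ hH hX hu hv hadj

lemma displays_of_iso (e : G₁ ≃g G₂) (he : ∀ x, e (leaf₁ x) = leaf₂ x)
    {a b c d : X} (h : Displays G₁ leaf₁ a b c d) : Displays G₂ leaf₂ a b c d := by
  obtain ⟨p, hp, q, hq, hdisj⟩ := h
  refine ⟨(p.map e.toHom).copy (he a) (he b), ?_, (q.map e.toHom).copy (he c) (he d), ?_, ?_⟩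
  · rw [Walk.isPath_copy]
    exact Walk.map_isPath_of_injective e.toEquiv.injective hp
  · rw [Walk.isPath_copy]
    exact Walk.map_isPath_of_injective e.toEquiv.injective hq
  · intro v hv1 hv2
    rw [Walk.support_copy, Walk.support_map] at hv1 hv2
    obtain ⟨w1, hw1, hwe1⟩ := List.mem_map.1 hv1
    obtain ⟨w2, hw2, hwe2⟩ := List.mem_map.1 hv2
    have hww : w1 = w2 := e.toEquiv.injective (hwe1.trans hwe2.symm)
    exact hdisj w1 hw1 (hww ▸ hw2)

end PhyloPair


/-- Two phylogenetic trees on `X` display the same quartets iff there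
is a graph isomorphism between them fixing every element of `X`. -/
theorem tree_determined_by_quartets
    {V₁ V₂ X : Type} [Fintype V₁] [Fintype V₂] [Fintype X] [DecidableEq X]
    (hX : 3 ≤ Fintype.card X)
    (G₁ : SimpleGraph V₁) (G₂ : SimpleGraph V₂) (leaf₁ : X → V₁) (leaf₂ : X → V₂)
    (hT₁ : IsPhyloTree G₁ leaf₁) (hT₂ : IsPhyloTree G₂ leaf₂) :
    (∀ a b c d : X, P4 a b c d →
        (Displays G₁ leaf₁ a b c d ↔ Displays G₂ leaf₂ a b c d)) ↔
    ∃ φ : G₁ ≃g G₂, ∀ x : X, φ (leaf₁ x) = leaf₂ x := by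
  letI : DecidableEq V₁ := Classical.decEq _
  letI : DecidableEq V₂ := Classical.decEq _
  constructor
  · intro hH
    have hH' : ∀ a b c d : X, P4 a b c d →
        (Displays G₂ leaf₂ a b c d ↔ Displays G₁ leaf₁ a b c d) :=
      fun a b c d h => (hH a b c d h).symm
    refine ⟨⟨⟨phi hT₁ hT₂ hH hX, phi hT₂ hT₁ hH' hX,
      phi_left_inverse hT₁ hT₂ hH hX, ?_⟩, ?_⟩, fun x => phi_leaf hT₁ hT₂ hH hX x⟩
    · exact fun w => phi_left_inverse hT₂ hT₁ hH' hX w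
    · intro u v
      constructor
      · intro h2
        have h3 : G₁.Adj (phi hT₂ hT₁ hH' hX (phi hT₁ hT₂ hH hX u))
            (phi hT₂ hT₁ hH' hX (phi hT₁ hT₂ hH hX v)) := phi_adj hT₂ hT₁ hH' hX h2
        rwa [phi_left_inverse hT₁ hT₂ hH hX, phi_left_inverse hT₁ hT₂ hH hX] at h3
      · exact phi_adj hT₁ hT₂ hH hX
  · rintro ⟨e, he⟩ a b c d hP
    have he' : ∀ x, e.symm (leaf₂ x) = leaf₁ x := by
      intro x
      rw [← he x]
      exact e.toEquiv.symm_apply_apply _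
    exact ⟨displays_of_iso e he, displays_of_iso e.symm he'⟩

end PhyloPaper
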